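/- arXiv:2305.00180 — 2 statements merged into one kernel-verified Lean document; each statement's English description precedes it below -/
import Mathlib

section
/- Let $p,q,r>1$, $T>0$, $R\ge1$, and let $u,w\in C(\mathbf{R}\times[0,T])$ satisfy $u(x,t)=w(x,t)=0$ whenever $|x|>t+R$. Then there exists a constant $C>0$, independent of $T$, $u$ and $w$, such that: $\|L(|w|^p|u|^q)\|_1\le C\|w\|_2^p\|u\|_1^q(T+R)$; $\|L(|u|^r)\|_1\le C\|u\|_1^r(T+R)^2$; $\|L'(|w|^p|u|^q)\|_2\le C\|w\|_2^p\|u\|_1^q(T+R)$; $\|L'(|u|^r)\|_2\le C\|u\|_1^r(T+R)^2$; $\|L'(|w|^p|u|^q)\|_1\le C\|w\|_2^p\|u\|_1^q(T+R)$; and $\|L'(|u|^r)\|_1\le C\|u\|_1^r(T+R)^2$. -/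
open Set MeasureTheory intervalIntegral

lemma myIntBound {p a b : ℝ} (hp : 1 < p) (ha : 1 ≤ a) (hab : a ≤ b) :
    ∫ u in a..b, u ^ (-p) ≤ 1 / (p - 1) := by
  have ha0 : (0:ℝ) < a := lt_of_lt_of_le one_pos ha
  have h0 : (0:ℝ) ∉ Set.uIcc a b := by
    rw [uIcc_of_le hab]
    intro h
    exact absurd h.1 (by linarith)
  rw [integral_rpow (Or.inr ⟨by intro h; nlinarith [neg_eq_iff_eq_neg.mp h], h0⟩)]
  have h1 : a ^ (-p + 1) ≤ 1 :=
    Real.rpow_le_one_of_one_le_of_nonpos ha (by linarith)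
  have h2 : (0:ℝ) ≤ b ^ (-p + 1) := Real.rpow_nonneg (by linarith) _
  have h3 : (b ^ (-p + 1) - a ^ (-p + 1)) / (-p + 1) = (a ^ (-p + 1) - b ^ (-p + 1)) / (p - 1) := by
    rw [div_eq_div_iff (by linarith) (by linarith)]; ring
  rw [h3]
  gcongr
  · linarith

lemma myBound {T R : ℝ} (hT : 0 ≤ T) (hR : 1 ≤ R) {u : ℝ → ℝ → ℝ}
    (hc : ContinuousOn (fun z : ℝ × ℝ => u z.1 z.2) ((univ : Set ℝ) ×ˢ Icc 0 T))
    (hsupp : ∀ x t : ℝ, t ∈ Icc (0:ℝ) T → t + R < |x| → u x t = 0) :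
    ∃ b : ℝ, 0 ≤ b ∧ ∀ x t : ℝ, t ∈ Icc (0:ℝ) T → |u x t| ≤ b := by
  have hK : IsCompact ((Icc (-(T+R+1)) (T+R+1)) ×ˢ Icc (0:ℝ) T) :=
    isCompact_Icc.prod isCompact_Icc
  obtain ⟨C, hC⟩ := hK.exists_bound_of_continuousOn
    (hc.mono (prod_mono (subset_univ _) subset_rfl))
  refine ⟨max C 0, le_max_right _ _, fun x t ht => ?_⟩
  by_cases hx : |x| ≤ T + R + 1
  · have := hC (x, t) ⟨by constructor <;> [linarith [neg_abs_le x]; linarith [le_abs_self x]], ht⟩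
    simp only [Real.norm_eq_abs] at this
    exact this.trans (le_max_left _ _)
  · rw [hsupp x t ht (by push_neg at hx; linarith [ht.2])]
    simp [le_max_right]

lemma key_inner {p R T M : ℝ} (hp : 1 < p) (hR : 1 ≤ R) (hM : 0 ≤ M)
    {F : ℝ → ℝ → ℝ}
    (hFc : ContinuousOn (fun z : ℝ × ℝ => F z.1 z.2) ((univ : Set ℝ) ×ˢ Icc 0 T))
    (hF0 : ∀ y s : ℝ, 0 ≤ F y s)
    (hFsupp : ∀ y s : ℝ, s ∈ Icc (0:ℝ) T → s + R < |y| → F y s = 0)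
    (hFbd : ∀ y s : ℝ, s ∈ Icc (0:ℝ) T → 0 < s - |y| + 2*R →
      F y s ≤ M * (s - |y| + 2*R) ^ (-p))
    {s a b : ℝ} (hs : s ∈ Icc (0:ℝ) T) (hab : a ≤ b) :
    |∫ y in a..b, F y s| ≤ M * (2 / (p - 1)) := by
  have hs0 := hs.1
  set c := s + R with hcdef
  have hc1 : (1:ℝ) ≤ c := by simp only [hcdef]; linarith
  have hcont : Continuous fun y => F y s := by
    have h2 : ContinuousOn (fun y : ℝ => F y s) univ := by
      have h1 : (fun y : ℝ => F y s) = (fun z : ℝ × ℝ => F z.1 z.2) ∘ (fun y => (y, s)) := rfl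
      rw [h1]
      exact hFc.comp (Continuous.continuousOn (by fun_prop)) (fun y _ => ⟨mem_univ _, hs⟩)
    exact continuousOn_univ.mp h2
  rw [abs_of_nonneg (intervalIntegral.integral_nonneg hab fun y _ => hF0 y s)]
  rw [intervalIntegral.integral_of_le hab]
  have hind : ∀ y : ℝ, F y s = (Icc (-c) c).indicator (fun y => F y s) y := by
    intro y
    by_cases h : y ∈ Icc (-c) c
    · rw [indicator_of_mem h]
    · rw [indicator_of_notMem h]
      apply hFsupp y s hs
      rw [mem_Icc, not_and_or] at h
      rcases h with h | h <;> push_neg at h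
      · exact lt_of_lt_of_le (by linarith) (neg_le_abs y)
      · exact lt_of_lt_of_le h (le_abs_self y)
  have hFint : IntegrableOn (fun y => F y s) (Icc (-c) c) := hcont.integrableOn_Icc
  have hg1c : ContinuousOn (fun y : ℝ => (s + 2*R - y) ^ (-p)) (Icc (-c) c) := by
    apply ContinuousOn.rpow_const (by fun_prop)
    intro y hy
    left
    have := hy.2
    simp only [hcdef] at this ⊢
    intro hzero; nlinarith
  have hg2c : ContinuousOn (fun y : ℝ => (s + 2*R + y) ^ (-p)) (Icc (-c) c) := by
    apply ContinuousOn.rpow_const (by fun_prop)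
    intro y hy
    left
    have := hy.1
    simp only [hcdef] at this ⊢
    intro hzero; nlinarith
  have hgc : ContinuousOn
      (fun y : ℝ => M * ((s + 2*R - y) ^ (-p) + (s + 2*R + y) ^ (-p))) (Icc (-c) c) :=
    continuousOn_const.mul (hg1c.add hg2c)
  calc ∫ y in Ioc a b, F y s
      = ∫ y in Ioc a b, (Icc (-c) c).indicator (fun y => F y s) y :=
        setIntegral_congr_fun measurableSet_Ioc (fun y _ => hind y)
    _ ≤ ∫ y, (Icc (-c) c).indicator (fun y => F y s) y := by
        apply setIntegral_le_integral (hFint.integrable_indicator measurableSet_Icc)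
        exact Filter.Eventually.of_forall (fun y => indicator_nonneg (fun y _ => hF0 y s) y)
    _ = ∫ y in Icc (-c) c, F y s := integral_indicator measurableSet_Icc
    _ ≤ ∫ y in Icc (-c) c, M * ((s + 2*R - y) ^ (-p) + (s + 2*R + y) ^ (-p)) := by
        apply setIntegral_mono_on hFint (hgc.integrableOn_compact isCompact_Icc)
          measurableSet_Icc
        intro y hy
        have hyc : |y| ≤ c := abs_le.mpr ⟨by linarith [hy.1], hy.2⟩
        have hω : 0 < s - |y| + 2*R := by simp only [hcdef] at hyc; linarith
        have hF := hFbd y s hs hω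
        rcases le_or_gt 0 y with h | h
        · rw [abs_of_nonneg h] at hF
          have h2 : s - y + 2*R = s + 2*R - y := by ring
          rw [h2] at hF
          refine hF.trans (mul_le_mul_of_nonneg_left ?_ hM)
          exact le_add_of_nonneg_right (Real.rpow_nonneg (by simp only [hcdef] at hyc ⊢; linarith [abs_nonneg y, neg_le_abs y]) _)
        · rw [abs_of_neg h] at hF
          have h2 : s - -y + 2*R = s + 2*R + y := by ring
          rw [h2] at hF
          refine hF.trans (mul_le_mul_of_nonneg_left ?_ hM)
          exact le_add_of_nonneg_left (Real.rpow_nonneg (by simp only [hcdef] at hyc ⊢; linarith [le_abs_self y]) _)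
    _ ≤ M * (2 / (p - 1)) := by
        rw [MeasureTheory.integral_Icc_eq_integral_Ioc,
          ← intervalIntegral.integral_of_le (by linarith : -c ≤ c),
          intervalIntegral.integral_const_mul]
        apply mul_le_mul_of_nonneg_left ?_ hM
        have hi1 : IntervalIntegrable (fun y : ℝ => (s + 2*R - y) ^ (-p)) volume (-c) c := by
          apply ContinuousOn.intervalIntegrable
          rw [uIcc_of_le (by linarith : -c ≤ c)]
          exact hg1c
        have hi2 : IntervalIntegrable (fun y : ℝ => (s + 2*R + y) ^ (-p)) volume (-c) c := by
          apply ContinuousOn.intervalIntegrable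
          rw [uIcc_of_le (by linarith : -c ≤ c)]
          exact hg2c
        rw [intervalIntegral.integral_add hi1 hi2]
        have e1 : (∫ y in (-c)..c, (s + 2*R - y) ^ (-p))
            = ∫ u in (s + 2*R - c)..(s + 2*R - -c), u ^ (-p) :=
          intervalIntegral.integral_comp_sub_left (fun u => u ^ (-p)) (s + 2*R)
        have e2 : (∫ y in (-c)..c, (s + 2*R + y) ^ (-p))
            = ∫ u in (s + 2*R + -c)..(s + 2*R + c), u ^ (-p) :=
          intervalIntegral.integral_comp_add_left (fun u => u ^ (-p)) (s + 2*R)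
        rw [e1, e2]
        have b1 := myIntBound (a := s + 2*R - c) (b := s + 2*R - -c) hp
          (by simp only [hcdef]; linarith) (by linarith)
        have b2 := myIntBound (a := s + 2*R + -c) (b := s + 2*R + c) hp
          (by simp only [hcdef]; linarith) (by linarith)
        calc _ ≤ 1/(p-1) + 1/(p-1) := add_le_add b1 b2
          _ = 2/(p-1) := by ring

lemma key_char {p R T M : ℝ} (hp : 1 < p) (hR : 1 ≤ R) (hM : 0 ≤ M)
    {F : ℝ → ℝ → ℝ}
    (hFc : ContinuousOn (fun z : ℝ × ℝ => F z.1 z.2) ((univ : Set ℝ) ×ˢ Icc 0 T))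
    (hF0 : ∀ y s : ℝ, 0 ≤ F y s)
    (hFsupp : ∀ y s : ℝ, s ∈ Icc (0:ℝ) T → s + R < |y| → F y s = 0)
    (hFbd : ∀ y s : ℝ, s ∈ Icc (0:ℝ) T → 0 < s - |y| + 2*R →
      F y s ≤ M * (s - |y| + 2*R) ^ (-p))
    {x t : ℝ} (ht : t ∈ Icc (0:ℝ) T) (hx : |x| ≤ t + R) :
    (t - |x| + 2*R) * (∫ s in (0:ℝ)..t, F (x + t - s) s) ≤ M * ((T + R) * (1/(p-1) + 1)) := by
  obtain ⟨ht0, htT⟩ := ht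
  have hTR : (0:ℝ) < T + R := by linarith
  have hω0 : 0 < t - |x| + 2*R := by linarith
  have hωle : t - |x| + 2*R ≤ 2*(T+R) := by linarith [abs_nonneg x]
  have hcont : ContinuousOn (fun s => F (x + t - s) s) (Icc 0 t) := by
    have h1 : (fun s : ℝ => F (x + t - s) s)
        = (fun z : ℝ × ℝ => F z.1 z.2) ∘ (fun s : ℝ => (x + t - s, s)) := rfl
    rw [h1]
    exact hFc.comp (Continuous.continuousOn (by fun_prop))
      (fun s hs => ⟨mem_univ _, ⟨hs.1, hs.2.trans htT⟩⟩)
  have hvan : ∀ σ' : ℝ, 0 ≤ σ' → σ' ≤ t → (∀ s', 0 < s' → s' < σ' → s' < (x + t - R)/2) →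
      (∫ s in (0:ℝ)..σ', F (x + t - s) s) = 0 := by
    intro σ' h0 hσt hlt
    rw [intervalIntegral.integral_of_le h0, MeasureTheory.integral_Ioc_eq_integral_Ioo]
    rw [setIntegral_congr_fun measurableSet_Ioo (g := fun _ => (0:ℝ)) ?_]
    · simp
    · intro s' hs'
      have hlt' := hlt s' hs'.1 hs'.2
      have hy : s' + R < |x + t - s'| :=
        lt_of_lt_of_le (by linarith) (le_abs_self _)
      exact hFsupp _ s' ⟨hs'.1.le, by linarith [hs'.2]⟩ hy
  by_cases hst : (x + t - R)/2 ≤ t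
  swap
  · push_neg at hst
    rw [hvan t ht0 le_rfl (fun s' h1 h2 => lt_trans h2 hst), mul_zero]
    apply mul_nonneg hM
    apply mul_nonneg hTR.le
    have hp1 : (0:ℝ) < p - 1 := by linarith
    positivity
  · set σ := max ((x + t - R)/2) 0 with hσdef
    have hσ0 : 0 ≤ σ := le_max_right _ _
    have hσt : σ ≤ t := max_le hst ht0
    have hσs₀ : (x + t - R)/2 ≤ σ := le_max_left _ _
    have hii1 : IntervalIntegrable (fun s => F (x + t - s) s) volume 0 σ :=
      ContinuousOn.intervalIntegrable
        (hcont.mono ((uIcc_of_le hσ0) ▸ Icc_subset_Icc le_rfl hσt))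
    have hii2 : IntervalIntegrable (fun s => F (x + t - s) s) volume σ t :=
      ContinuousOn.intervalIntegrable
        (hcont.mono ((uIcc_of_le hσt) ▸ Icc_subset_Icc hσ0 le_rfl))
    rw [← intervalIntegral.integral_add_adjacent_intervals hii1 hii2]
    rw [hvan σ hσ0 hσt ?_, zero_add]
    swap
    · intro s' h1 h2
      rcases le_or_gt ((x + t - R)/2) 0 with h | h
      · rw [hσdef, max_eq_right h] at h2; linarith
      · rwa [hσdef, max_eq_left h.le] at h2
    set D := max (x + t + 2*R) R with hDdef
    have hD1 : (1:ℝ) ≤ D := le_trans hR (le_max_right _ _)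
    have hD0 : (0:ℝ) < D := lt_of_lt_of_le one_pos hD1
    have hDnn : (0:ℝ) ≤ D ^ (-p) := Real.rpow_nonneg hD0.le _
    have hbase : ∀ s : ℝ, s ∈ Icc σ t → (0:ℝ) < 2*s - (x + t) + 2*R := by
      intro s hs
      have := hs.1
      have h2 : (x + t - R)/2 ≤ s := le_trans hσs₀ this
      linarith
    have hg1c : ContinuousOn (fun s : ℝ => (2*s - (x + t) + 2*R) ^ (-p)) (Icc σ t) := by
      apply ContinuousOn.rpow_const (by fun_prop)
      intro s hs
      exact Or.inl (ne_of_gt (hbase s hs))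
    have hg1i : IntervalIntegrable (fun s : ℝ => (2*s - (x + t) + 2*R) ^ (-p)) volume σ t :=
      ContinuousOn.intervalIntegrable ((uIcc_of_le hσt) ▸ hg1c)
    have hmono : (∫ s in σ..t, F (x + t - s) s)
        ≤ ∫ s in σ..t, M * ((2*s - (x + t) + 2*R) ^ (-p) + D ^ (-p)) := by
      apply intervalIntegral.integral_mono_on hσt hii2
      · exact ContinuousOn.intervalIntegrable
          ((uIcc_of_le hσt) ▸ (continuousOn_const.mul (hg1c.add continuousOn_const)))
      · intro s hs
        have hsT : s ∈ Icc (0:ℝ) T := ⟨hσ0.trans hs.1, hs.2.trans htT⟩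
        have hb := hbase s hs
        by_cases hsup : s + R < |x + t - s|
        · rw [hFsupp _ _ hsT hsup]
          positivity
        · push_neg at hsup
          have hω' : 0 < s - |x + t - s| + 2*R := by linarith
          have hF := hFbd (x + t - s) s hsT hω'
          rcases le_or_gt 0 (x + t - s) with h | h
          · rw [abs_of_nonneg h] at hF
            have e : s - (x + t - s) + 2*R = 2*s - (x + t) + 2*R := by ring
            rw [e] at hF
            exact hF.trans (mul_le_mul_of_nonneg_left (le_add_of_nonneg_right hDnn) hM)
          · rw [abs_of_neg h] at hF hsup
            have e : s - -(x + t - s) + 2*R = x + t + 2*R := by ring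
            rw [e] at hF
            have hcD : D = x + t + 2*R := max_eq_left (by linarith)
            rw [hcD]
            refine hF.trans (mul_le_mul_of_nonneg_left
              (le_add_of_nonneg_left (Real.rpow_nonneg (by linarith) _)) hM)
    have hA : (∫ s in σ..t, (2*s - (x + t) + 2*R) ^ (-p)) ≤ 1/2 * (1/(p-1)) := by
      have e : ∀ s : ℝ, (2*s - (x + t) + 2*R : ℝ) = 2*s + (2*R - (x + t)) := fun s => by ring
      simp_rw [e]
      have e2 : (∫ s in σ..t, ((2:ℝ)*s + (2*R - (x + t))) ^ (-p))
          = (2:ℝ)⁻¹ • ∫ u in (2*σ + (2*R - (x + t)))..(2*t + (2*R - (x + t))), u ^ (-p) :=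
        intervalIntegral.integral_comp_mul_add (fun u => u ^ (-p)) two_ne_zero _
      rw [e2, smul_eq_mul]
      have hb := myIntBound (a := 2*σ + (2*R - (x + t))) (b := 2*t + (2*R - (x + t))) hp
        (by linarith) (by linarith)
      calc (2:ℝ)⁻¹ * _ ≤ (2:ℝ)⁻¹ * (1/(p-1)) :=
            mul_le_mul_of_nonneg_left hb (by norm_num)
        _ = 1/2 * (1/(p-1)) := by norm_num
    have hAnn : (0:ℝ) ≤ ∫ s in σ..t, (2*s - (x + t) + 2*R) ^ (-p) :=
      intervalIntegral.integral_nonneg hσt (fun s hs => Real.rpow_nonneg (hbase s hs).le _)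
    have hIg : (∫ s in σ..t, M * ((2*s - (x + t) + 2*R) ^ (-p) + D ^ (-p)))
        = M * ((∫ s in σ..t, (2*s - (x + t) + 2*R) ^ (-p)) + (t - σ) * D ^ (-p)) := by
      rw [intervalIntegral.integral_const_mul,
        intervalIntegral.integral_add hg1i intervalIntegrable_const,
        intervalIntegral.integral_const, smul_eq_mul]
    have hDD : D * D ^ (-p) ≤ 1 := by
      have e : D * D ^ (-p) = D ^ (1 + -p) := by
        rw [Real.rpow_add hD0, Real.rpow_one]
      rw [e]
      exact Real.rpow_le_one_of_one_le_of_nonpos hD1 (by linarith)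
    have hωD : t - |x| + 2*R ≤ D := le_trans (by linarith [neg_abs_le x]) (le_max_left _ _)
    calc (t - |x| + 2*R) * ∫ s in σ..t, F (x + t - s) s
        ≤ (t - |x| + 2*R) * (M * ((∫ s in σ..t, (2*s - (x + t) + 2*R) ^ (-p)) + (t - σ) * D ^ (-p))) :=
          mul_le_mul_of_nonneg_left (hmono.trans_eq hIg) hω0.le
      _ = M * ((t - |x| + 2*R) * (∫ s in σ..t, (2*s - (x + t) + 2*R) ^ (-p))
            + ((t - |x| + 2*R) * (t - σ)) * D ^ (-p)) := by ring
      _ ≤ M * ((2*(T+R)) * (1/2 * (1/(p-1))) + (D * t) * D ^ (-p)) := by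
          apply mul_le_mul_of_nonneg_left ?_ hM
          apply add_le_add
          · exact mul_le_mul hωle hA hAnn (by linarith)
          · exact mul_le_mul_of_nonneg_right
              (mul_le_mul hωD (by linarith) (by linarith) hD0.le) hDnn
      _ = M * ((T+R) * (1/(p-1)) + t * (D * D ^ (-p))) := by ring
      _ ≤ M * ((T+R) * (1/(p-1)) + (T+R) * 1) := by
          apply mul_le_mul_of_nonneg_left ?_ hM
          apply add_le_add le_rfl
          have h1 : t * (D * D ^ (-p)) ≤ t * 1 :=
            mul_le_mul_of_nonneg_left hDD ht0
          linarith
      _ = M * ((T + R) * (1/(p-1) + 1)) := by ring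

lemma key_char' {p R T M : ℝ} (hp : 1 < p) (hR : 1 ≤ R) (hM : 0 ≤ M)
    {F : ℝ → ℝ → ℝ}
    (hFc : ContinuousOn (fun z : ℝ × ℝ => F z.1 z.2) ((univ : Set ℝ) ×ˢ Icc 0 T))
    (hF0 : ∀ y s : ℝ, 0 ≤ F y s)
    (hFsupp : ∀ y s : ℝ, s ∈ Icc (0:ℝ) T → s + R < |y| → F y s = 0)
    (hFbd : ∀ y s : ℝ, s ∈ Icc (0:ℝ) T → 0 < s - |y| + 2*R →
      F y s ≤ M * (s - |y| + 2*R) ^ (-p))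
    {x t : ℝ} (ht : t ∈ Icc (0:ℝ) T) (hx : |x| ≤ t + R) :
    (t - |x| + 2*R) * (∫ s in (0:ℝ)..t, F (x - t + s) s) ≤ M * ((T + R) * (1/(p-1) + 1)) := by
  have hGc : ContinuousOn (fun z : ℝ × ℝ => F (-z.1) z.2) ((univ : Set ℝ) ×ˢ Icc 0 T) := by
    have h1 : (fun z : ℝ × ℝ => F (-z.1) z.2)
        = (fun z : ℝ × ℝ => F z.1 z.2) ∘ (fun z : ℝ × ℝ => (-z.1, z.2)) := rfl
    rw [h1]
    exact hFc.comp (Continuous.continuousOn (by fun_prop)) (fun z hz => ⟨mem_univ _, hz.2⟩)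
  have h := key_char (F := fun y s => F (-y) s) hp hR hM hGc (fun y s => hF0 (-y) s)
    (fun y s hs hy => hFsupp (-y) s hs (by rwa [abs_neg]))
    (fun y s hs h0 => by
      have h1 := hFbd (-y) s hs (by rwa [abs_neg])
      rwa [abs_neg] at h1)
    (x := -x) (t := t) ht (by rwa [abs_neg])
  rw [abs_neg] at h
  have e : (∫ s in (0:ℝ)..t, F (x - t + s) s) = ∫ s in (0:ℝ)..t, F (-(-x + t - s)) s :=
    intervalIntegral.integral_congr (fun s _ => by rw [show -(-x + t - s) = x - t + s from by ring])
  rw [e]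
  exact h

noncomputable section

/-- The Duhamel operator `L`. -/
def Lop (v : ℝ → ℝ → ℝ) (x t : ℝ) : ℝ :=
  (1 / 2) * ∫ s in (0:ℝ)..t, (∫ y in (x - t + s)..(x + t - s), v y s)

/-- The Duhamel operator `L'`. -/
def Lop' (v : ℝ → ℝ → ℝ) (x t : ℝ) : ℝ :=
  (1 / 2) * ∫ s in (0:ℝ)..t, (v (x + t - s) s + v (x - t + s) s)

/-- The sup-norm `‖·‖₁` over `ℝ × [0,T]`. -/
def norm1 (T : ℝ) (u : ℝ → ℝ → ℝ) : ℝ :=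
  ⨆ z : ℝ × ↥(Icc (0:ℝ) T), |u z.1 (z.2 : ℝ)|

/-- The weighted sup-norm `‖·‖₂` over `ℝ × [0,T]` with weight `t - |x| + 2R`. -/
def norm2 (R T : ℝ) (w : ℝ → ℝ → ℝ) : ℝ :=
  ⨆ z : ℝ × ↥(Icc (0:ℝ) T), |((z.2 : ℝ) - |z.1| + 2 * R) * w z.1 (z.2 : ℝ)|

set_option maxHeartbeats 2000000 in
/-- Proposition 3.1: a priori estimates in the weighted `L^∞` spaces. -/
theorem stmt5 (p q r R : ℝ) (hp : 1 < p) (hq : 1 < q) (hr : 1 < r) (hR : 1 ≤ R) :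
    ∃ C > (0:ℝ), ∀ T : ℝ, 0 < T → ∀ u w : ℝ → ℝ → ℝ,
      ContinuousOn (fun z : ℝ × ℝ => u z.1 z.2) ((univ : Set ℝ) ×ˢ Icc 0 T) →
      ContinuousOn (fun z : ℝ × ℝ => w z.1 z.2) ((univ : Set ℝ) ×ˢ Icc 0 T) →
      (∀ x t : ℝ, t ∈ Icc (0:ℝ) T → t + R < |x| → u x t = 0 ∧ w x t = 0) →
      norm1 T (Lop (fun y s => |w y s| ^ p * |u y s| ^ q)) ≤
        C * norm2 R T w ^ p * norm1 T u ^ q * (T + R) ∧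
      norm1 T (Lop (fun y s => |u y s| ^ r)) ≤ C * norm1 T u ^ r * (T + R) ^ (2:ℝ) ∧
      norm2 R T (Lop' (fun y s => |w y s| ^ p * |u y s| ^ q)) ≤
        C * norm2 R T w ^ p * norm1 T u ^ q * (T + R) ∧
      norm2 R T (Lop' (fun y s => |u y s| ^ r)) ≤ C * norm1 T u ^ r * (T + R) ^ (2:ℝ) ∧
      norm1 T (Lop' (fun y s => |w y s| ^ p * |u y s| ^ q)) ≤
        C * norm2 R T w ^ p * norm1 T u ^ q * (T + R) ∧
      norm1 T (Lop' (fun y s => |u y s| ^ r)) ≤ C * norm1 T u ^ r * (T + R) ^ (2:ℝ) := by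
  have hp1 : (0:ℝ) < p - 1 := by linarith
  refine ⟨2 + 2/(p-1), by positivity, ?_⟩
  intro T hT u w hcu hcw hsupp
  have hT0 : (0:ℝ) ≤ T := hT.le
  have hTR1 : (1:ℝ) ≤ T + R := by linarith
  have hTR0 : (0:ℝ) < T + R := by linarith
  haveI : Nonempty ↥(Icc (0:ℝ) T) := ⟨⟨0, ⟨le_rfl, hT0⟩⟩⟩
  obtain ⟨bu, hbu0, hbu⟩ := myBound hT0 hR hcu (fun x t ht h => (hsupp x t ht h).1)
  obtain ⟨bw, hbw0, hbw⟩ := myBound hT0 hR hcw (fun x t ht h => (hsupp x t ht h).2)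
  have hbdd1 : BddAbove (range fun z : ℝ × ↥(Icc (0:ℝ) T) => |u z.1 (z.2:ℝ)|) := by
    refine ⟨bu, ?_⟩
    rintro _ ⟨z, rfl⟩
    exact hbu z.1 z.2 z.2.2
  have hu_le : ∀ y s : ℝ, s ∈ Icc (0:ℝ) T → |u y s| ≤ norm1 T u := fun y s hs =>
    le_ciSup hbdd1 (⟨y, ⟨s, hs⟩⟩ : ℝ × ↥(Icc (0:ℝ) T))
  have hn1 : 0 ≤ norm1 T u := (abs_nonneg _).trans (hu_le 0 0 ⟨le_rfl, hT0⟩)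
  have hbdd2 : BddAbove (range fun z : ℝ × ↥(Icc (0:ℝ) T) =>
      |((z.2:ℝ) - |z.1| + 2*R) * w z.1 (z.2:ℝ)|) := by
    refine ⟨(2*T + 3*R + 1) * bw, ?_⟩
    rintro _ ⟨z, rfl⟩
    show |((z.2:ℝ) - |z.1| + 2*R) * w z.1 (z.2:ℝ)| ≤ (2*T + 3*R + 1) * bw
    by_cases hx : |z.1| ≤ T + R + 1
    · rw [abs_mul]
      apply mul_le_mul ?_ (hbw z.1 z.2 z.2.2) (abs_nonneg _) (by linarith)
      rw [abs_le]
      constructor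
      · linarith [z.2.2.1, z.2.2.2, abs_nonneg z.1]
      · linarith [z.2.2.1, z.2.2.2, abs_nonneg z.1]
    · push_neg at hx
      rw [(hsupp z.1 z.2 z.2.2 (by linarith [z.2.2.2])).2, mul_zero, abs_zero]
      exact mul_nonneg (by linarith) hbw0
  have hw_le : ∀ y s : ℝ, s ∈ Icc (0:ℝ) T → |(s - |y| + 2*R) * w y s| ≤ norm2 R T w :=
    fun y s hs => le_ciSup hbdd2 (⟨y, ⟨s, hs⟩⟩ : ℝ × ↥(Icc (0:ℝ) T))
  have hn2 : 0 ≤ norm2 R T w := (abs_nonneg _).trans (hw_le 0 0 ⟨le_rfl, hT0⟩)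
  set M := norm2 R T w ^ p * norm1 T u ^ q with hMdef
  have hM : 0 ≤ M := mul_nonneg (Real.rpow_nonneg hn2 _) (Real.rpow_nonneg hn1 _)
  have hF₁c : ContinuousOn (fun z : ℝ × ℝ => |w z.1 z.2| ^ p * |u z.1 z.2| ^ q)
      ((univ : Set ℝ) ×ˢ Icc 0 T) :=
    (hcw.abs.rpow_const (fun z _ => Or.inr (by linarith))).mul
      (hcu.abs.rpow_const (fun z _ => Or.inr (by linarith)))
  have hF₁0 : ∀ y s : ℝ, 0 ≤ |w y s| ^ p * |u y s| ^ q := fun y s =>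
    mul_nonneg (Real.rpow_nonneg (abs_nonneg _) _) (Real.rpow_nonneg (abs_nonneg _) _)
  have hF₁supp : ∀ y s : ℝ, s ∈ Icc (0:ℝ) T → s + R < |y| →
      |w y s| ^ p * |u y s| ^ q = 0 := by
    intro y s hs h
    rw [(hsupp y s hs h).1, (hsupp y s hs h).2, abs_zero,
      Real.zero_rpow (by linarith : p ≠ 0), zero_mul]
  have hF₁bd : ∀ y s : ℝ, s ∈ Icc (0:ℝ) T → 0 < s - |y| + 2*R →
      |w y s| ^ p * |u y s| ^ q ≤ M * (s - |y| + 2*R) ^ (-p) := by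
    intro y s hs hω
    have h1 : |w y s| ≤ norm2 R T w / (s - |y| + 2*R) := by
      rw [le_div_iff₀ hω]
      have h2 := hw_le y s hs
      rwa [abs_mul, abs_of_pos hω, mul_comm] at h2
    calc |w y s| ^ p * |u y s| ^ q
        ≤ (norm2 R T w / (s - |y| + 2*R)) ^ p * norm1 T u ^ q :=
          mul_le_mul (Real.rpow_le_rpow (abs_nonneg _) h1 (by linarith))
            (Real.rpow_le_rpow (abs_nonneg _) (hu_le y s hs) (by linarith))
            (Real.rpow_nonneg (abs_nonneg _) _)
            (Real.rpow_nonneg (div_nonneg hn2 hω.le) _)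
      _ = M * (s - |y| + 2*R) ^ (-p) := by
          rw [Real.div_rpow hn2 hω.le, Real.rpow_neg hω.le, hMdef]
          ring
  have hF₁M : ∀ y s : ℝ, s ∈ Icc (0:ℝ) T → |w y s| ^ p * |u y s| ^ q ≤ M := by
    intro y s hs
    by_cases h : s + R < |y|
    · rw [hF₁supp y s hs h]; exact hM
    · push_neg at h
      have hω : 0 < s - |y| + 2*R := by linarith [hs.1]
      refine (hF₁bd y s hs hω).trans ?_
      have h2 := Real.rpow_le_one_of_one_le_of_nonpos
        (show (1:ℝ) ≤ s - |y| + 2*R by linarith [hs.1]) (by linarith : -p ≤ 0)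
      exact (mul_le_mul_of_nonneg_left h2 hM).trans_eq (mul_one M)
  have hF₂M : ∀ y s : ℝ, s ∈ Icc (0:ℝ) T → |u y s| ^ r ≤ norm1 T u ^ r := fun y s hs =>
    Real.rpow_le_rpow (abs_nonneg _) (hu_le y s hs) (by linarith)
  have hF₂supp : ∀ y s : ℝ, s ∈ Icc (0:ℝ) T → s + R < |y| → |u y s| ^ r = 0 := by
    intro y s hs h
    rw [(hsupp y s hs h).1, abs_zero, Real.zero_rpow (by linarith : r ≠ 0)]
  have hnr : 0 ≤ norm1 T u ^ r := Real.rpow_nonneg hn1 _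
  have hvanish : ∀ (G : ℝ → ℝ → ℝ),
      (∀ y s : ℝ, s ∈ Icc (0:ℝ) T → s + R < |y| → G y s = 0) →
      ∀ x t : ℝ, t ∈ Icc (0:ℝ) T → t + R < |x| → Lop' G x t = 0 := by
    intro G hG x t ht hx
    rw [Lop', intervalIntegral.integral_congr (g := fun _ => (0:ℝ)) ?_]
    · simp
    · intro s hs
      rw [uIcc_of_le ht.1] at hs
      have h1 := abs_sub_abs_le_abs_sub x (s - t)
      rw [show x - (s - t) = x + t - s from by ring] at h1
      have h2 := abs_sub_abs_le_abs_sub x (t - s)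
      rw [show x - (t - s) = x - t + s from by ring] at h2
      have h3 : |s - t| = t - s := by rw [abs_of_nonpos (by linarith [hs.2]), neg_sub]
      have h4 : |t - s| = t - s := abs_of_nonneg (by linarith [hs.2])
      show G (x + t - s) s + G (x - t + s) s = 0
      rw [hG _ s ⟨hs.1, hs.2.trans ht.2⟩ (by rw [h3] at h1; linarith),
        hG _ s ⟨hs.1, hs.2.trans ht.2⟩ (by rw [h4] at h2; linarith), add_zero]
  have hchar : ∀ (G : ℝ → ℝ → ℝ),
      ContinuousOn (fun z : ℝ × ℝ => G z.1 z.2) ((univ : Set ℝ) ×ˢ Icc 0 T) →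
      ∀ x t : ℝ, t ∈ Icc (0:ℝ) T →
      IntervalIntegrable (fun s => G (x + t - s) s) volume 0 t ∧
      IntervalIntegrable (fun s => G (x - t + s) s) volume 0 t := by
    intro G hG x t ht
    constructor
    · apply ContinuousOn.intervalIntegrable
      rw [uIcc_of_le ht.1]
      have h1 : (fun s : ℝ => G (x + t - s) s)
          = (fun z : ℝ × ℝ => G z.1 z.2) ∘ (fun s : ℝ => (x + t - s, s)) := rfl
      rw [h1]
      exact hG.comp (Continuous.continuousOn (by fun_prop))
        (fun s hs => ⟨mem_univ _, ⟨hs.1, hs.2.trans ht.2⟩⟩)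
    · apply ContinuousOn.intervalIntegrable
      rw [uIcc_of_le ht.1]
      have h1 : (fun s : ℝ => G (x - t + s) s)
          = (fun z : ℝ × ℝ => G z.1 z.2) ∘ (fun s : ℝ => (x - t + s, s)) := rfl
      rw [h1]
      exact hG.comp (Continuous.continuousOn (by fun_prop))
        (fun s hs => ⟨mem_univ _, ⟨hs.1, hs.2.trans ht.2⟩⟩)
  have hfin1 : ∀ X : ℝ, X ≤ M * ((T+R) * (1/(p-1) + 1)) →
      X ≤ (2 + 2/(p-1)) * norm2 R T w ^ p * norm1 T u ^ q * (T + R) := by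
    intro X hX
    have h0 : 0 ≤ 1/(p-1) := by positivity
    have h1 : 1/(p-1) + 1 ≤ 2 + 2/(p-1) := by
      have h2 : 1/(p-1) ≤ 2/(p-1) := (div_le_div_iff_of_pos_right hp1).mpr one_le_two
      linarith
    calc X ≤ M * ((T+R) * (1/(p-1) + 1)) := hX
      _ ≤ M * ((T+R) * (2 + 2/(p-1))) :=
          mul_le_mul_of_nonneg_left (mul_le_mul_of_nonneg_left h1 hTR0.le) hM
      _ = (2 + 2/(p-1)) * norm2 R T w ^ p * norm1 T u ^ q * (T + R) := by
          rw [hMdef]; ring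
  have hfin2 : ∀ X : ℝ, X ≤ norm1 T u ^ r * ((T+R) * (T+R)) * 2 →
      X ≤ (2 + 2/(p-1)) * norm1 T u ^ r * (T + R) ^ (2:ℝ) := by
    intro X hX
    have h2 : (T+R) ^ (2:ℝ) = (T+R) * (T+R) := by
      rw [show (2:ℝ) = ((2:ℕ):ℝ) from by norm_num, Real.rpow_natCast]
      ring
    rw [h2]
    have h0 : 0 ≤ 2/(p-1) := by positivity
    have h1 : (2:ℝ) ≤ 2 + 2/(p-1) := by linarith
    calc X ≤ norm1 T u ^ r * ((T+R) * (T+R)) * 2 := hX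
      _ ≤ norm1 T u ^ r * ((T+R) * (T+R)) * (2 + 2/(p-1)) :=
          mul_le_mul_of_nonneg_left h1
            (mul_nonneg hnr (mul_nonneg hTR0.le hTR0.le))
      _ = (2 + 2/(p-1)) * norm1 T u ^ r * ((T+R) * (T+R)) := by ring
  refine ⟨?_, ?_, ?_, ?_, ?_, ?_⟩
  · -- norm1 (Lop F₁)
    refine hfin1 _ ?_
    rw [norm1]
    apply ciSup_le
    rintro ⟨x, t, ht⟩
    obtain ⟨ht0, htT⟩ := ht
    show |Lop (fun y s => |w y s| ^ p * |u y s| ^ q) x t| ≤ _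
    have hout : ‖∫ s in (0:ℝ)..t, ∫ y in (x - t + s)..(x + t - s), |w y s| ^ p * |u y s| ^ q‖
        ≤ M * (2/(p-1)) * |t - 0| := by
      apply intervalIntegral.norm_integral_le_of_norm_le_const
      intro s hs
      rw [uIoc_of_le ht0] at hs
      rw [Real.norm_eq_abs]
      exact key_inner hp hR hM hF₁c hF₁0 hF₁supp hF₁bd ⟨hs.1.le, hs.2.trans htT⟩
        (by linarith [hs.1, hs.2])
    rw [Real.norm_eq_abs, sub_zero, abs_of_nonneg ht0] at hout
    have hL : |Lop (fun y s => |w y s| ^ p * |u y s| ^ q) x t| ≤ 1/2 * (M * (2/(p-1)) * t) := by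
      rw [Lop, abs_mul, abs_of_nonneg (by norm_num : (0:ℝ) ≤ 1/2)]
      exact mul_le_mul_of_nonneg_left hout (by norm_num)
    refine hL.trans ?_
    have he : 1/2 * (M * (2/(p-1)) * t) = M * (t * (1/(p-1))) := by ring
    rw [he]
    apply mul_le_mul_of_nonneg_left ?_ hM
    have h0 : (0:ℝ) ≤ 1/(p-1) := by positivity
    nlinarith [mul_le_mul_of_nonneg_right (show t ≤ T + R by linarith) h0, hTR0]
  · -- norm1 (Lop F₂)
    refine hfin2 _ ?_
    rw [norm1]
    apply ciSup_le
    rintro ⟨x, t, ht⟩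
    obtain ⟨ht0, htT⟩ := ht
    show |Lop (fun y s => |u y s| ^ r) x t| ≤ _
    have hout : ‖∫ s in (0:ℝ)..t, ∫ y in (x - t + s)..(x + t - s), |u y s| ^ r‖
        ≤ (norm1 T u ^ r * (2*t)) * |t - 0| := by
      apply intervalIntegral.norm_integral_le_of_norm_le_const
      intro s hs
      rw [uIoc_of_le ht0] at hs
      have hin : ‖∫ y in (x - t + s)..(x + t - s), |u y s| ^ r‖
          ≤ norm1 T u ^ r * |(x + t - s) - (x - t + s)| := by
        apply intervalIntegral.norm_integral_le_of_norm_le_const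
        intro y hy
        rw [Real.norm_eq_abs, abs_of_nonneg (Real.rpow_nonneg (abs_nonneg _) _)]
        exact hF₂M y s ⟨hs.1.le, hs.2.trans htT⟩
      rw [Real.norm_eq_abs] at hin ⊢
      refine hin.trans ?_
      rw [show (x + t - s) - (x - t + s) = 2*(t - s) from by ring,
        abs_of_nonneg (by linarith [hs.2] : (0:ℝ) ≤ 2*(t-s))]
      apply mul_le_mul_of_nonneg_left ?_ hnr
      linarith [hs.1]
    rw [Real.norm_eq_abs, sub_zero, abs_of_nonneg ht0] at hout
    have hL : |Lop (fun y s => |u y s| ^ r) x t| ≤ 1/2 * ((norm1 T u ^ r * (2*t)) * t) := by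
      rw [Lop, abs_mul, abs_of_nonneg (by norm_num : (0:ℝ) ≤ 1/2)]
      exact mul_le_mul_of_nonneg_left hout (by norm_num)
    refine hL.trans ?_
    have ht2 : t * t ≤ (T+R)*(T+R) := mul_le_mul (by linarith) (by linarith) ht0 (by linarith)
    nlinarith [mul_le_mul_of_nonneg_left ht2 hnr,
      mul_nonneg hnr (mul_nonneg hTR0.le hTR0.le)]
  · -- norm2 (Lop' F₁)
    refine hfin1 _ ?_
    rw [norm2]
    apply ciSup_le
    rintro ⟨x, t, ht⟩
    obtain ⟨ht0, htT⟩ := ht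
    show |(t - |x| + 2*R) * Lop' (fun y s => |w y s| ^ p * |u y s| ^ q) x t| ≤ _
    by_cases hx : |x| ≤ t + R
    · have hω : (0:ℝ) < t - |x| + 2*R := by linarith
      obtain ⟨hip, him⟩ := hchar (fun y s => |w y s| ^ p * |u y s| ^ q) hF₁c x t ⟨ht0, htT⟩
      have hJp : 0 ≤ ∫ s in (0:ℝ)..t, |w (x+t-s) s| ^ p * |u (x+t-s) s| ^ q :=
        intervalIntegral.integral_nonneg ht0 (fun s _ => hF₁0 _ _)
      have hJm : 0 ≤ ∫ s in (0:ℝ)..t, |w (x-t+s) s| ^ p * |u (x-t+s) s| ^ q :=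
        intervalIntegral.integral_nonneg ht0 (fun s _ => hF₁0 _ _)
      have hsplit : Lop' (fun y s => |w y s| ^ p * |u y s| ^ q) x t
          = 1/2 * ((∫ s in (0:ℝ)..t, |w (x+t-s) s| ^ p * |u (x+t-s) s| ^ q)
            + (∫ s in (0:ℝ)..t, |w (x-t+s) s| ^ p * |u (x-t+s) s| ^ q)) := by
        rw [Lop', intervalIntegral.integral_add hip him]
      have hplus := key_char hp hR hM hF₁c hF₁0 hF₁supp hF₁bd ⟨ht0, htT⟩ hx
      have hminus := key_char' hp hR hM hF₁c hF₁0 hF₁supp hF₁bd ⟨ht0, htT⟩ hx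
      rw [hsplit, abs_of_nonneg (mul_nonneg hω.le
        (mul_nonneg (by norm_num) (add_nonneg hJp hJm)))]
      linarith [hplus, hminus]
    · push_neg at hx
      rw [hvanish _ hF₁supp x t ⟨ht0, htT⟩ hx, mul_zero, abs_zero]
      have h0 : (0:ℝ) ≤ 1/(p-1) := by positivity
      exact mul_nonneg hM (mul_nonneg hTR0.le (by linarith))
  · -- norm2 (Lop' F₂)
    refine hfin2 _ ?_
    rw [norm2]
    apply ciSup_le
    rintro ⟨x, t, ht⟩
    obtain ⟨ht0, htT⟩ := ht
    show |(t - |x| + 2*R) * Lop' (fun y s => |u y s| ^ r) x t| ≤ _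
    by_cases hx : |x| ≤ t + R
    · have hout : ‖∫ s in (0:ℝ)..t, (|u (x+t-s) s| ^ r + |u (x-t+s) s| ^ r)‖
          ≤ (2 * norm1 T u ^ r) * |t - 0| := by
        apply intervalIntegral.norm_integral_le_of_norm_le_const
        intro s hs
        rw [uIoc_of_le ht0] at hs
        have hsT : s ∈ Icc (0:ℝ) T := ⟨hs.1.le, hs.2.trans htT⟩
        rw [Real.norm_eq_abs, abs_of_nonneg (add_nonneg
          (Real.rpow_nonneg (abs_nonneg _) _) (Real.rpow_nonneg (abs_nonneg _) _))]
        linarith [hF₂M (x+t-s) s hsT, hF₂M (x-t+s) s hsT]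
      rw [Real.norm_eq_abs, sub_zero, abs_of_nonneg ht0] at hout
      have hL : |Lop' (fun y s => |u y s| ^ r) x t| ≤ 1/2 * ((2 * norm1 T u ^ r) * t) := by
        rw [Lop', abs_mul, abs_of_nonneg (by norm_num : (0:ℝ) ≤ 1/2)]
        exact mul_le_mul_of_nonneg_left hout (by norm_num)
      rw [abs_mul]
      have hωa : |t - |x| + 2*R| ≤ 2*(T+R) := by
        rw [abs_le]
        constructor
        · linarith [abs_nonneg x]
        · linarith [abs_nonneg x]
      calc |t - |x| + 2*R| * |Lop' (fun y s => |u y s| ^ r) x t|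
          ≤ (2*(T+R)) * (1/2 * ((2 * norm1 T u ^ r) * t)) :=
            mul_le_mul hωa hL (abs_nonneg _) (by linarith)
        _ ≤ norm1 T u ^ r * ((T+R)*(T+R)) * 2 := by
            nlinarith [mul_le_mul_of_nonneg_left (show t ≤ T+R by linarith) hnr, hTR0.le, hnr]
    · push_neg at hx
      rw [hvanish _ hF₂supp x t ⟨ht0, htT⟩ hx, mul_zero, abs_zero]
      exact mul_nonneg (mul_nonneg hnr (mul_nonneg hTR0.le hTR0.le)) (by norm_num)
  · -- norm1 (Lop' F₁)
    refine hfin1 _ ?_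
    rw [norm1]
    apply ciSup_le
    rintro ⟨x, t, ht⟩
    obtain ⟨ht0, htT⟩ := ht
    show |Lop' (fun y s => |w y s| ^ p * |u y s| ^ q) x t| ≤ _
    have hout : ‖∫ s in (0:ℝ)..t,
        (|w (x+t-s) s| ^ p * |u (x+t-s) s| ^ q + |w (x-t+s) s| ^ p * |u (x-t+s) s| ^ q)‖
        ≤ (2 * M) * |t - 0| := by
      apply intervalIntegral.norm_integral_le_of_norm_le_const
      intro s hs
      rw [uIoc_of_le ht0] at hs
      have hsT : s ∈ Icc (0:ℝ) T := ⟨hs.1.le, hs.2.trans htT⟩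
      rw [Real.norm_eq_abs, abs_of_nonneg (add_nonneg (hF₁0 _ _) (hF₁0 _ _))]
      linarith [hF₁M (x+t-s) s hsT, hF₁M (x-t+s) s hsT]
    rw [Real.norm_eq_abs, sub_zero, abs_of_nonneg ht0] at hout
    have hL : |Lop' (fun y s => |w y s| ^ p * |u y s| ^ q) x t| ≤ 1/2 * ((2 * M) * t) := by
      rw [Lop', abs_mul, abs_of_nonneg (by norm_num : (0:ℝ) ≤ 1/2)]
      exact mul_le_mul_of_nonneg_left hout (by norm_num)
    refine hL.trans ?_
    have h0 : (0:ℝ) ≤ 1/(p-1) := by positivity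
    nlinarith [mul_le_mul_of_nonneg_left (show t ≤ T+R by linarith) hM,
      mul_nonneg (mul_nonneg hM hTR0.le) h0]
  · -- norm1 (Lop' F₂)
    refine hfin2 _ ?_
    rw [norm1]
    apply ciSup_le
    rintro ⟨x, t, ht⟩
    obtain ⟨ht0, htT⟩ := ht
    show |Lop' (fun y s => |u y s| ^ r) x t| ≤ _
    have hout : ‖∫ s in (0:ℝ)..t, (|u (x+t-s) s| ^ r + |u (x-t+s) s| ^ r)‖
        ≤ (2 * norm1 T u ^ r) * |t - 0| := by
      apply intervalIntegral.norm_integral_le_of_norm_le_const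
      intro s hs
      rw [uIoc_of_le ht0] at hs
      have hsT : s ∈ Icc (0:ℝ) T := ⟨hs.1.le, hs.2.trans htT⟩
      rw [Real.norm_eq_abs, abs_of_nonneg (add_nonneg
        (Real.rpow_nonneg (abs_nonneg _) _) (Real.rpow_nonneg (abs_nonneg _) _))]
      linarith [hF₂M (x+t-s) s hsT, hF₂M (x-t+s) s hsT]
    rw [Real.norm_eq_abs, sub_zero, abs_of_nonneg ht0] at hout
    have hL : |Lop' (fun y s => |u y s| ^ r) x t| ≤ 1/2 * ((2 * norm1 T u ^ r) * t) := by
      rw [Lop', abs_mul, abs_of_nonneg (by norm_num : (0:ℝ) ≤ 1/2)]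
      exact mul_le_mul_of_nonneg_left hout (by norm_num)
    refine hL.trans ?_
    nlinarith [mul_le_mul_of_nonneg_left (show t ≤ T+R by linarith) hnr,
      mul_nonneg hnr hTR0.le, hTR1]

end
end

section
/- Let $p,q,r>1$, $T>0$, $R\ge1$, and let $U,W\in C(\mathbf{R}\times[0,T])$ vanish for $|x|>t+R$. Then there exists a constant $C>0$ independent of $T$ such that: $\|L(|W|^p|U|^q)\|_3\le C\|W\|_4^p\|U\|_3^q(T+R)^{p+q}$; $\|L(|U|^r)\|_3\le C\|U\|_3^r(T+R)^{r+1}$; $\|L'(|W|^p|U|^q)\|_4\le C\|W\|_4^p\|U\|_3^q(T+R)^{p+q}$; $\|L'(|U|^r)\|_4\le C\|U\|_3^r(T+R)^{r+1}$; $\|L'(|W|^p|U|^q)\|_3\le C\|W\|_4^p\|U\|_3^q(T+R)^{p+q}$; and $\|L'(|U|^r)\|_3\le C\|U\|_3^r(T+R)^{r+1}$. -/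
open Set MeasureTheory

noncomputable section

/-- The weighted sup-norm `‖·‖₃` with weight `(t + |x| + R)⁻¹`. -/
def norm3 (R T : ℝ) (U : ℝ → ℝ → ℝ) : ℝ :=
  ⨆ z : ℝ × ↥(Icc (0:ℝ) T), ((z.2 : ℝ) + |z.1| + R)⁻¹ * |U z.1 (z.2 : ℝ)|

/-- The weight `χ_D + (1 - χ_D)(t + |x| + R)⁻¹` where `D = {t - |x| ≥ R}`. -/
def weight4 (R x t : ℝ) : ℝ := if R ≤ t - |x| then 1 else (t + |x| + R)⁻¹

/-- The weighted sup-norm `‖·‖₄`. -/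
def norm4 (R T : ℝ) (W : ℝ → ℝ → ℝ) : ℝ :=
  ⨆ z : ℝ × ↥(Icc (0:ℝ) T), weight4 R z.1 (z.2 : ℝ) * |W z.1 (z.2 : ℝ)|

/-- The plain sup-norm `‖·‖_∞` over `ℝ × [0,T]`. -/
def normInf (T : ℝ) (U : ℝ → ℝ → ℝ) : ℝ :=
  ⨆ z : ℝ × ↥(Icc (0:ℝ) T), |U z.1 (z.2 : ℝ)|


lemma indInt {m : ℝ} {E : Set ℝ} (hE : MeasurableSet E) (hEm : volume E ≤ ENNReal.ofReal m) :
    ∀ a b : ℝ, IntegrableOn (fun s => E.indicator (fun _ => (1:ℝ)) s) (Ioc a b) volume := by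
  intro a b
  have : IntegrableOn (fun _ => (1:ℝ)) E volume :=
    integrableOn_const (hEm.trans_lt ENNReal.ofReal_lt_top).ne
  exact (this.integrable_indicator hE).integrableOn

lemma boundInt {F : ℝ → ℝ} {a b c₁ c₂ m : ℝ} {E : Set ℝ} (hab : a ≤ b)
    (hE : MeasurableSet E) (hEm : volume E ≤ ENNReal.ofReal m)
    (hc₁ : 0 ≤ c₁) (hc₂ : 0 ≤ c₂) (hm : 0 ≤ m)
    (hF : ∀ s ∈ Set.Ioc a b, |F s| ≤ c₁ + c₂ * E.indicator (fun _ => (1:ℝ)) s) :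
    |∫ s in a..b, F s| ≤ c₁ * (b - a) + c₂ * m := by
  have hEfin : volume E ≠ ⊤ := ne_top_of_le_ne_top ENNReal.ofReal_ne_top hEm
  have hind : IntervalIntegrable (fun s => E.indicator (fun _ => (1:ℝ)) s) volume a b :=
    (intervalIntegrable_iff_integrableOn_Ioc_of_le hab).2 (indInt hE hEm a b)
  have hG : IntervalIntegrable (fun s => c₁ + c₂ * E.indicator (fun _ => (1:ℝ)) s) volume a b :=
    intervalIntegrable_const.add (hind.const_mul c₂)
  have h1 : ‖∫ s in a..b, F s‖ ≤ |∫ s in a..b, (c₁ + c₂ * E.indicator (fun _ => (1:ℝ)) s)| := by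
    apply intervalIntegral.norm_integral_le_abs_of_norm_le _ hG
    refine (ae_restrict_iff' measurableSet_uIoc).2 (Filter.Eventually.of_forall ?_)
    intro s hs
    rw [uIoc_of_le hab] at hs
    simpa using hF s hs
  rw [Real.norm_eq_abs] at h1
  refine h1.trans ?_
  have h2 : (∫ s in a..b, (c₁ + c₂ * E.indicator (fun _ => (1:ℝ)) s))
      = c₁ * (b - a) + c₂ * ∫ s in a..b, E.indicator (fun _ => (1:ℝ)) s := by
    rw [intervalIntegral.integral_add intervalIntegrable_const (hind.const_mul c₂),
      intervalIntegral.integral_const, intervalIntegral.integral_const_mul, smul_eq_mul]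
    ring
  have h3 : (∫ s in a..b, E.indicator (fun _ => (1:ℝ)) s) ≤ m := by
    rw [intervalIntegral.integral_of_le hab, setIntegral_indicator hE, setIntegral_const,
      smul_eq_mul, mul_one]
    refine le_trans (ENNReal.toReal_mono ENNReal.ofReal_ne_top
      (le_trans (measure_mono inter_subset_right) hEm)) ?_
    rw [ENNReal.toReal_ofReal hm]
  have h4 : (0:ℝ) ≤ ∫ s in a..b, E.indicator (fun _ => (1:ℝ)) s := by
    apply intervalIntegral.integral_nonneg hab
    intro s _; exact Set.indicator_nonneg (fun _ _ => zero_le_one) s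
  have h5 := mul_nonneg hc₂ h4
  have h6 := mul_nonneg hc₁ (sub_nonneg.2 hab)
  rw [h2, abs_of_nonneg (by linarith)]
  have := mul_le_mul_of_nonneg_left h3 hc₂
  linarith

lemma halfIntBound {F : ℝ → ℝ} {t c₁ c₂ m : ℝ} {E : Set ℝ} (ht : 0 ≤ t)
    (hE : MeasurableSet E) (hEm : volume E ≤ ENNReal.ofReal m)
    (hc₁ : 0 ≤ c₁) (hc₂ : 0 ≤ c₂) (hm : 0 ≤ m)
    (hF : ∀ s ∈ Set.Ioc (0:ℝ) t, |F s| ≤ c₁ + c₂ * E.indicator (fun _ => (1:ℝ)) s) :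
    |(1/2 : ℝ) * ∫ s in (0:ℝ)..t, F s| ≤ (c₁ * t + c₂ * m)/2 := by
  have h := boundInt ht hE hEm hc₁ hc₂ hm hF
  rw [abs_mul, abs_of_nonneg (by norm_num : (0:ℝ) ≤ 1/2)]
  linarith

lemma wnormLe {T R : ℝ} (hT : 0 < T) (hR : 1 ≤ R) (U : ℝ → ℝ → ℝ) (w : ℝ → ℝ → ℝ)
    (hw : ∀ x t : ℝ, t ∈ Icc (0:ℝ) T → 0 ≤ w x t ∧ w x t ≤ 1)
    (hc : ContinuousOn (fun z : ℝ × ℝ => U z.1 z.2) ((univ : Set ℝ) ×ˢ Icc 0 T))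
    (hz : ∀ x t : ℝ, t ∈ Icc (0:ℝ) T → t + R < |x| → U x t = 0) :
    ∀ x t : ℝ, t ∈ Icc (0:ℝ) T → w x t * |U x t| ≤
      ⨆ z : ℝ × ↥(Icc (0:ℝ) T), w z.1 (z.2 : ℝ) * |U z.1 (z.2 : ℝ)| := by
  obtain ⟨C₀, hC₀⟩ := (IsCompact.exists_bound_of_continuousOn
    ((isCompact_Icc (a := -(T+R)) (b := T+R)).prod (isCompact_Icc (a := (0:ℝ)) (b := T)))
    (hc.mono (by intro z hz'; exact ⟨mem_univ _, hz'.2⟩)))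
  have hbdd : BddAbove (Set.range fun z : ℝ × ↥(Icc (0:ℝ) T) =>
      w z.1 (z.2 : ℝ) * |U z.1 (z.2 : ℝ)|) := by
    refine ⟨max C₀ 0, ?_⟩
    rintro _ ⟨z, rfl⟩
    have ht : (z.2 : ℝ) ∈ Icc (0:ℝ) T := z.2.2
    have habs : |U z.1 (z.2 : ℝ)| ≤ max C₀ 0 := by
      rcases le_or_gt |z.1| (T + R) with h | h
      · have := hC₀ (z.1, (z.2 : ℝ)) ⟨abs_le.1 h, ht⟩
        exact le_trans (by simpa [Real.norm_eq_abs] using this) (le_max_left _ _)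
      · have : U z.1 (z.2 : ℝ) = 0 := hz _ _ ht (by have := ht.2; linarith)
        simp [this]
    calc w z.1 (z.2 : ℝ) * |U z.1 (z.2 : ℝ)| ≤ 1 * (max C₀ 0) := by
          apply mul_le_mul (hw _ _ ht).2 habs (abs_nonneg _) zero_le_one
      _ = max C₀ 0 := one_mul _
  intro x t ht
  exact le_ciSup hbdd (⟨x, ⟨t, ht⟩⟩ : ℝ × ↥(Icc (0:ℝ) T))

lemma charStrip {R a s : ℝ} (ha : R ≤ a) (h1 : s - R < |a - s|) (h2 : |a - s| ≤ s + R) :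
    s ∈ Icc ((a-R)/2) ((a+R)/2) := by
  rcases le_or_gt s a with h | h
  · rw [abs_of_nonneg (by linarith)] at h1 h2
    constructor <;> [linarith; linarith]
  · rw [abs_of_neg (by linarith)] at h1
    constructor <;> [linarith; linarith]

lemma indUnion (I₁ I₂ : Set ℝ) (s : ℝ) :
    I₁.indicator (fun _ => (1:ℝ)) s + I₂.indicator (fun _ => (1:ℝ)) s ≤
      2 * (I₁ ∪ I₂).indicator (fun _ => (1:ℝ)) s := by
  by_cases h1 : s ∈ I₁ <;> by_cases h2 : s ∈ I₂ <;>
    simp [Set.indicator_of_mem, Set.indicator_of_notMem, h1, h2, Set.mem_union] <;> norm_num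

lemma volAbsIoc (s R : ℝ) (hR : 0 ≤ R) :
    volume ((fun y : ℝ => |y|) ⁻¹' Ioc (s-R) (s+R)) ≤ ENNReal.ofReal (4*R) := by
  have hsub : (fun y : ℝ => |y|) ⁻¹' Ioc (s-R) (s+R) ⊆
      Icc (s-R) (s+R) ∪ Icc (-(s+R)) (-(s-R)) := by
    intro y hy
    rcases le_or_gt 0 y with h | h
    · left; rw [mem_preimage, abs_of_nonneg h] at hy; exact ⟨le_of_lt hy.1, hy.2⟩
    · right; rw [mem_preimage, abs_of_neg h] at hy; constructor <;> linarith [hy.1, hy.2]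
  calc volume ((fun y : ℝ => |y|) ⁻¹' Ioc (s-R) (s+R)) ≤
      volume (Icc (s-R) (s+R)) + volume (Icc (-(s+R)) (-(s-R))) :=
        le_trans (measure_mono hsub) (measure_union_le _ _)
    _ ≤ ENNReal.ofReal (4*R) := by
        rw [Real.volume_Icc, Real.volume_Icc, ← ENNReal.ofReal_add (by linarith) (by linarith)]
        apply ENNReal.ofReal_le_ofReal; linarith

lemma volIccUnion (a b R : ℝ) (hR : 0 ≤ R) :
    volume (Icc ((a-R)/2) ((a+R)/2) ∪ Icc ((b-R)/2) ((b+R)/2)) ≤ ENNReal.ofReal (2*R) := by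
  calc volume (Icc ((a-R)/2) ((a+R)/2) ∪ Icc ((b-R)/2) ((b+R)/2)) ≤
      volume (Icc ((a-R)/2) ((a+R)/2)) + volume (Icc ((b-R)/2) ((b+R)/2)) := measure_union_le _ _
    _ ≤ ENNReal.ofReal (2*R) := by
        rw [Real.volume_Icc, Real.volume_Icc, ← ENNReal.ofReal_add (by linarith) (by linarith)]
        apply ENNReal.ofReal_le_ofReal; linarith

lemma uBound {r R MU : ℝ} (hr : 1 < r) (hR : 1 ≤ R)
    (hMU : 0 ≤ MU) {U : ℝ → ℝ → ℝ} {s : ℝ} (hs : 0 ≤ s)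
    (hU : ∀ y, |U y s| ≤ MU * (s + |y| + R))
    (hz : ∀ y, s + R < |y| → U y s = 0) :
    ∀ y, |U y s| ^ r ≤ 2^r * MU^r * (s+R)^r := by
  intro y
  rcases lt_or_ge (s + R) |y| with hy | hy
  · rw [hz y hy, abs_zero, Real.zero_rpow (by linarith)]
    positivity
  · have hA : (0:ℝ) < s + |y| + R := by have := abs_nonneg y; linarith
    calc |U y s| ^ r ≤ (MU * (s + |y| + R)) ^ r :=
          Real.rpow_le_rpow (abs_nonneg _) (hU y) (by linarith)
      _ ≤ (MU * (2 * (s + R))) ^ r := by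
          apply Real.rpow_le_rpow (by positivity) _ (by linarith)
          nlinarith
      _ = 2^r * MU^r * (s+R)^r := by
          rw [show MU * (2 * (s+R)) = 2 * (MU * (s+R)) by ring,
            Real.mul_rpow (by norm_num) (by positivity),
            Real.mul_rpow hMU (by linarith)]
          ring

lemma gBound {p q R MU MW : ℝ} (hp : 1 < p) (hq : 1 < q) (hR : 1 ≤ R)
    (hMU : 0 ≤ MU) (hMW : 0 ≤ MW) {W U : ℝ → ℝ → ℝ} {s : ℝ} (hs : 0 ≤ s)
    (hU : ∀ y, |U y s| ≤ MU * (s + |y| + R))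
    (hW : ∀ y, |W y s| ≤ MW * (if R ≤ s - |y| then 1 else s + |y| + R))
    (hz : ∀ y, s + R < |y| → U y s = 0) :
    ∀ y, |W y s| ^ p * |U y s| ^ q ≤
      2^(p+q) * (MW^p * MU^q) * (s+R)^q
      + 2^(p+q) * (MW^p * MU^q) * (s+R)^(p+q) *
        ((fun y : ℝ => |y|) ⁻¹' Ioc (s-R) (s+R)).indicator (fun _ => (1:ℝ)) y := by
  intro y
  have hsR : (1:ℝ) ≤ s + R := by linarith
  have hind0 : (0:ℝ) ≤ ((fun y : ℝ => |y|) ⁻¹' Ioc (s-R) (s+R)).indicator (fun _ => (1:ℝ)) y :=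
    Set.indicator_nonneg (fun _ _ => zero_le_one) y
  have h2 : (0:ℝ) ≤ 2^(p+q) * (MW^p * MU^q) * (s+R)^(p+q) := by positivity
  rcases lt_or_ge (s + R) |y| with hy | hy
  · rw [hz y hy, abs_zero, Real.zero_rpow (by linarith), mul_zero]
    have : (0:ℝ) ≤ 2^(p+q) * (MW^p * MU^q) * (s+R)^q := by positivity
    nlinarith
  · have hA : (0:ℝ) < s + |y| + R := by have := abs_nonneg y; linarith
    have hA2 : s + |y| + R ≤ 2 * (s + R) := by linarith
    have hUq : |U y s| ^ q ≤ MU^q * (2*(s+R))^q := by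
      calc |U y s| ^ q ≤ (MU * (s + |y| + R)) ^ q :=
            Real.rpow_le_rpow (abs_nonneg _) (hU y) (by linarith)
        _ ≤ (MU * (2 * (s + R))) ^ q := by
            apply Real.rpow_le_rpow (by positivity) _ (by linarith)
            nlinarith
        _ = MU^q * (2*(s+R))^q := Real.mul_rpow hMU (by linarith)
    by_cases hD : R ≤ s - |y|
    · have hWp : |W y s| ^ p ≤ MW ^ p := by
        have := hW y; rw [if_pos hD, mul_one] at this
        exact Real.rpow_le_rpow (abs_nonneg _) this (by linarith)
      have hkey : |W y s| ^ p * |U y s| ^ q ≤ MW^p * (MU^q * (2*(s+R))^q) :=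
        mul_le_mul hWp hUq (Real.rpow_nonneg (abs_nonneg _) _) (by positivity)
      have h2q : (2:ℝ)^q * (s+R)^q ≤ 2^(p+q) * (s+R)^q := by
        apply mul_le_mul_of_nonneg_right _ (Real.rpow_nonneg (by linarith) _)
        exact Real.rpow_le_rpow_of_exponent_le one_le_two (by linarith)
      have hexp : ((2:ℝ)*(s+R))^q = 2^q * (s+R)^q := Real.mul_rpow (by norm_num) (by linarith)
      rw [hexp] at hkey
      nlinarith [mul_nonneg (Real.rpow_nonneg hMW p) (Real.rpow_nonneg hMU q),
        mul_le_mul_of_nonneg_left h2q (mul_nonneg (Real.rpow_nonneg hMW p) (Real.rpow_nonneg hMU q))]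
    · have hmem : y ∈ (fun y : ℝ => |y|) ⁻¹' Ioc (s-R) (s+R) := by
        rw [mem_preimage, mem_Ioc]; constructor
        · linarith [not_le.1 hD]
        · exact hy
      rw [Set.indicator_of_mem hmem]
      have hWp : |W y s| ^ p ≤ MW ^ p * (2*(s+R))^p := by
        have := hW y; rw [if_neg hD] at this
        calc |W y s| ^ p ≤ (MW * (s + |y| + R)) ^ p :=
              Real.rpow_le_rpow (abs_nonneg _) this (by linarith)
          _ ≤ (MW * (2 * (s + R))) ^ p := by
              apply Real.rpow_le_rpow (by positivity) _ (by linarith)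
              nlinarith
          _ = MW^p * (2*(s+R))^p := Real.mul_rpow hMW (by linarith)
      have key : |W y s| ^ p * |U y s| ^ q ≤ (MW^p * (2*(s+R))^p) * (MU^q * (2*(s+R))^q) :=
        mul_le_mul hWp hUq (Real.rpow_nonneg (abs_nonneg _) _) (by positivity)
      have hexp : ((2:ℝ)*(s+R))^p * (2*(s+R))^q = (2*(s+R))^(p+q) :=
        (Real.rpow_add (by linarith) _ _).symm
      have hexp2 : ((2:ℝ)*(s+R))^(p+q) = 2^(p+q) * (s+R)^(p+q) :=
        Real.mul_rpow (by norm_num) (by linarith)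
      have h1 : (0:ℝ) ≤ 2^(p+q) * (MW^p * MU^q) * (s+R)^q := by positivity
      calc |W y s| ^ p * |U y s| ^ q ≤ (MW^p * (2*(s+R))^p) * (MU^q * (2*(s+R))^q) := key
        _ = (MW^p * MU^q) * ((2*(s+R))^p * (2*(s+R))^q) := by ring
        _ = 2^(p+q) * (MW^p * MU^q) * (s+R)^(p+q) := by rw [hexp, hexp2]; ring
        _ ≤ _ := by rw [mul_one]; linarith

set_option maxHeartbeats 2000000 in
/-- Proposition 5.2 (a priori estimates in the zero-mean weighted spaces). -/
theorem stmt7 (p q r R : ℝ) (hp : 1 < p) (hq : 1 < q) (hr : 1 < r) (hR : 1 ≤ R) :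
    ∃ C > (0:ℝ), ∀ T : ℝ, 0 < T → ∀ U W : ℝ → ℝ → ℝ,
      ContinuousOn (fun z : ℝ × ℝ => U z.1 z.2) ((univ : Set ℝ) ×ˢ Icc 0 T) →
      ContinuousOn (fun z : ℝ × ℝ => W z.1 z.2) ((univ : Set ℝ) ×ˢ Icc 0 T) →
      (∀ x t : ℝ, t ∈ Icc (0:ℝ) T → t + R < |x| → U x t = 0 ∧ W x t = 0) →
      norm3 R T (Lop (fun y s => |W y s| ^ p * |U y s| ^ q)) ≤
        C * norm4 R T W ^ p * norm3 R T U ^ q * (T + R) ^ (p + q) ∧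
      norm3 R T (Lop (fun y s => |U y s| ^ r)) ≤
        C * norm3 R T U ^ r * (T + R) ^ (r + 1) ∧
      norm4 R T (Lop' (fun y s => |W y s| ^ p * |U y s| ^ q)) ≤
        C * norm4 R T W ^ p * norm3 R T U ^ q * (T + R) ^ (p + q) ∧
      norm4 R T (Lop' (fun y s => |U y s| ^ r)) ≤
        C * norm3 R T U ^ r * (T + R) ^ (r + 1) ∧
      norm3 R T (Lop' (fun y s => |W y s| ^ p * |U y s| ^ q)) ≤
        C * norm4 R T W ^ p * norm3 R T U ^ q * (T + R) ^ (p + q) ∧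
      norm3 R T (Lop' (fun y s => |U y s| ^ r)) ≤
        C * norm3 R T U ^ r * (T + R) ^ (r + 1) := by
  have h2pq : (0:ℝ) < 2^(p+q) := Real.rpow_pos_of_pos two_pos _
  have h2r : (0:ℝ) < 2^r := Real.rpow_pos_of_pos two_pos _
  refine ⟨(3 + 2*R) * ((2:ℝ)^(p+q) + (2:ℝ)^r), by nlinarith, ?_⟩
  intro T hT U W hUc hWc hsupp
  set Cc := (3 + 2*R) * ((2:ℝ)^(p+q) + (2:ℝ)^r) with hCcdef
  have hCc1 : (1 + 2*R) * 2^(p+q) ≤ Cc := by rw [hCcdef]; nlinarith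
  have hCc2 : (3 + 2*R) * 2^(p+q) ≤ Cc := by rw [hCcdef]; nlinarith
  have hCc3 : (2:ℝ)^r ≤ Cc := by rw [hCcdef]; nlinarith
  have hCc4 : (1 + 2*R) * 2^r ≤ Cc := by rw [hCcdef]; nlinarith
  have hCc0 : (0:ℝ) < Cc := by rw [hCcdef]; nlinarith
  have hTR1 : (1:ℝ) ≤ T + R := by linarith
  set MU := norm3 R T U with hMUdef
  set MW := norm4 R T W with hMWdef
  have hMU0 : 0 ≤ MU := by
    rw [hMUdef, norm3]
    exact Real.iSup_nonneg fun z => mul_nonneg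
      (inv_nonneg.2 (by linarith [abs_nonneg z.1, z.2.2.1])) (abs_nonneg _)
  have hMW0 : 0 ≤ MW := by
    rw [hMWdef, norm4]
    refine Real.iSup_nonneg fun z => mul_nonneg ?_ (abs_nonneg _)
    unfold weight4; split_ifs
    · exact zero_le_one
    · exact inv_nonneg.2 (by linarith [abs_nonneg z.1, z.2.2.1])
  have hUb : ∀ x t : ℝ, t ∈ Icc (0:ℝ) T → |U x t| ≤ MU * (t + |x| + R) := by
    intro x t ht
    have h1 : (0:ℝ) < t + |x| + R := by linarith [abs_nonneg x, ht.1]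
    have h3 : (t + |x| + R)⁻¹ * |U x t| ≤ MU := by
      rw [hMUdef, norm3]
      exact wnormLe hT hR U (fun x t => (t + |x| + R)⁻¹)
        (fun x t ht' => ⟨inv_nonneg.2 (by linarith [abs_nonneg x, ht'.1]),
          inv_le_one_of_one_le₀ (by linarith [abs_nonneg x, ht'.1])⟩)
        hUc (fun x t ht' hx => (hsupp x t ht' hx).1) x t ht
    have h4 := mul_le_mul_of_nonneg_left h3 h1.le
    rw [← mul_assoc, mul_inv_cancel₀ (ne_of_gt h1), one_mul] at h4
    linarith
  have hWb : ∀ x t : ℝ, t ∈ Icc (0:ℝ) T →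
      |W x t| ≤ MW * (if R ≤ t - |x| then 1 else t + |x| + R) := by
    intro x t ht
    have h1 : (0:ℝ) < t + |x| + R := by linarith [abs_nonneg x, ht.1]
    have h3 : weight4 R x t * |W x t| ≤ MW := by
      rw [hMWdef, norm4]
      refine wnormLe hT hR W (fun x t => weight4 R x t) ?_
        hWc (fun x t ht' hx => (hsupp x t ht' hx).2) x t ht
      intro x t ht'
      have h1' : (1:ℝ) ≤ t + |x| + R := by linarith [abs_nonneg x, ht'.1]
      show 0 ≤ weight4 R x t ∧ weight4 R x t ≤ 1
      unfold weight4; split_ifs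
      · exact ⟨zero_le_one, le_rfl⟩
      · exact ⟨inv_nonneg.2 (by linarith), inv_le_one_of_one_le₀ h1'⟩
    unfold weight4 at h3
    split_ifs at h3 ⊢ with hD
    · rw [one_mul] at h3; rw [mul_one]; exact h3
    · have h4 := mul_le_mul_of_nonneg_left h3 h1.le
      rw [← mul_assoc, mul_inv_cancel₀ (ne_of_gt h1), one_mul] at h4
      linarith
  have hgB : ∀ s : ℝ, s ∈ Icc (0:ℝ) T → ∀ y : ℝ, |W y s| ^ p * |U y s| ^ q ≤
      2^(p+q) * (MW^p * MU^q) * (s+R)^q + 2^(p+q) * (MW^p * MU^q) * (s+R)^(p+q) *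
        ((fun y : ℝ => |y|) ⁻¹' Ioc (s-R) (s+R)).indicator (fun _ => (1:ℝ)) y :=
    fun s hs => gBound hp hq hR hMU0 hMW0 hs.1 (fun y => hUb y s hs) (fun y => hWb y s hs)
      (fun y hy => (hsupp y s hs hy).1)
  have hfB : ∀ s : ℝ, s ∈ Icc (0:ℝ) T → ∀ y : ℝ, |U y s| ^ r ≤ 2^r * MU^r * (s+R)^r :=
    fun s hs => uBound hr hR hMU0 hs.1 (fun y => hUb y s hs) (fun y hy => (hsupp y s hs hy).1)
  have hg0 : ∀ y s : ℝ, (0:ℝ) ≤ |W y s| ^ p * |U y s| ^ q := fun y s =>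
    mul_nonneg (Real.rpow_nonneg (abs_nonneg _) _) (Real.rpow_nonneg (abs_nonneg _) _)
  have hf0 : ∀ y s : ℝ, (0:ℝ) ≤ |U y s| ^ r := fun y s => Real.rpow_nonneg (abs_nonneg _) _
  set K := 2^(p+q) * (MW^p * MU^q) with hKdef
  set K' := (2:ℝ)^r * MU^r with hK'def
  have hK0 : 0 ≤ K := mul_nonneg h2pq.le
    (mul_nonneg (Real.rpow_nonneg hMW0 _) (Real.rpow_nonneg hMU0 _))
  have hK'0 : 0 ≤ K' := mul_nonneg h2r.le (Real.rpow_nonneg hMU0 _)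
  have hTRpos : (0:ℝ) < T + R := by linarith
  have hRHSg : (0:ℝ) ≤ Cc * MW^p * MU^q * (T+R)^(p+q) :=
    mul_nonneg (mul_nonneg (mul_nonneg hCc0.le (Real.rpow_nonneg hMW0 _))
      (Real.rpow_nonneg hMU0 _)) (Real.rpow_nonneg hTRpos.le _)
  have hRHSf : (0:ℝ) ≤ Cc * MU^r * (T+R)^(r+1) :=
    mul_nonneg (mul_nonneg hCc0.le (Real.rpow_nonneg hMU0 _)) (Real.rpow_nonneg hTRpos.le _)
  have hind1 : ∀ (E : Set ℝ) (y : ℝ), E.indicator (fun _ => (1:ℝ)) y ≤ 1 := by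
    intro E y; by_cases h : y ∈ E <;> simp [h]
  have glueg1 : (1+2*R)*K*(T+R)^(p+q) ≤ Cc * MW^p * MU^q * (T+R)^(p+q) := by
    have h0 : (0:ℝ) ≤ MW^p*MU^q*(T+R)^(p+q) := mul_nonneg (mul_nonneg
      (Real.rpow_nonneg hMW0 _) (Real.rpow_nonneg hMU0 _)) (Real.rpow_nonneg hTRpos.le _)
    have h1 := mul_le_mul_of_nonneg_right hCc1 h0
    calc (1+2*R)*K*(T+R)^(p+q) = ((1+2*R)*2^(p+q)) * (MW^p*MU^q*(T+R)^(p+q)) := by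
          rw [hKdef]; ring
      _ ≤ Cc * (MW^p*MU^q*(T+R)^(p+q)) := h1
      _ = Cc * MW^p * MU^q * (T+R)^(p+q) := by ring
  have glueg3 : (3+2*R)*K*(T+R)^(p+q) ≤ Cc * MW^p * MU^q * (T+R)^(p+q) := by
    have h0 : (0:ℝ) ≤ MW^p*MU^q*(T+R)^(p+q) := mul_nonneg (mul_nonneg
      (Real.rpow_nonneg hMW0 _) (Real.rpow_nonneg hMU0 _)) (Real.rpow_nonneg hTRpos.le _)
    have h1 := mul_le_mul_of_nonneg_right hCc2 h0
    calc (3+2*R)*K*(T+R)^(p+q) = ((3+2*R)*2^(p+q)) * (MW^p*MU^q*(T+R)^(p+q)) := by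
          rw [hKdef]; ring
      _ ≤ Cc * (MW^p*MU^q*(T+R)^(p+q)) := h1
      _ = Cc * MW^p * MU^q * (T+R)^(p+q) := by ring
  have gluef : K'*(T+R)^(r+1) ≤ Cc * MU^r * (T+R)^(r+1) := by
    have h0 : (0:ℝ) ≤ MU^r*(T+R)^(r+1) := mul_nonneg (Real.rpow_nonneg hMU0 _)
      (Real.rpow_nonneg hTRpos.le _)
    have h1 := mul_le_mul_of_nonneg_right hCc3 h0
    calc K'*(T+R)^(r+1) = 2^r * (MU^r*(T+R)^(r+1)) := by rw [hK'def]; ring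
      _ ≤ Cc * (MU^r*(T+R)^(r+1)) := h1
      _ = Cc * MU^r * (T+R)^(r+1) := by ring
  have keyg : ∀ x t : ℝ, t ∈ Icc (0:ℝ) T →
      weight4 R x t * |Lop' (fun y s => |W y s| ^ p * |U y s| ^ q) x t| ≤
      (3+2*R) * K * (T+R)^(p+q) := by
    intro x t ht
    have ht0 : (0:ℝ) ≤ t := ht.1
    have htT : t ≤ T := ht.2
    have hx0 := abs_nonneg x
    have hxR : (0:ℝ) < t + |x| + R := by linarith
    have htR : (0:ℝ) < t + R := by linarith
    have htRpq0 : (0:ℝ) ≤ (t+R)^(p+q) := Real.rpow_nonneg htR.le _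
    have htRq0 : (0:ℝ) ≤ (t+R)^q := Real.rpow_nonneg htR.le _
    have hTRpq0 : (0:ℝ) ≤ (T+R)^(p+q) := Real.rpow_nonneg hTRpos.le _
    have hXK0 : (0:ℝ) ≤ K * (T+R)^(p+q) := mul_nonneg hK0 hTRpq0
    have hq2 : (t+R)^(q+1) ≤ (T+R)^(p+q) :=
      le_trans (Real.rpow_le_rpow htR.le (by linarith) (by linarith))
        (Real.rpow_le_rpow_of_exponent_le hTR1 (by linarith))
    have hpq2 : (t+R)^(p+q) ≤ (T+R)^(p+q) :=
      Real.rpow_le_rpow htR.le (by linarith) (by linarith)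
    have hq1 : (t+R)^(q+1) = (t+R)^q * (t+R) := Real.rpow_add_one (ne_of_gt htR) q
    show weight4 R x t * |(1/2 : ℝ) * ∫ s in (0:ℝ)..t,
        (|W (x + t - s) s| ^ p * |U (x + t - s) s| ^ q +
         |W (x - t + s) s| ^ p * |U (x - t + s) s| ^ q)| ≤ (3+2*R) * K * (T+R)^(p+q)
    by_cases hD : R ≤ t - |x|
    · have haR : R ≤ x + t := by linarith [neg_abs_le x]
      have hbR : R ≤ t - x := by linarith [le_abs_self x]
      have hFb : ∀ s ∈ Ioc (0:ℝ) t,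
          |(|W (x + t - s) s| ^ p * |U (x + t - s) s| ^ q +
            |W (x - t + s) s| ^ p * |U (x - t + s) s| ^ q)| ≤
          2*K*(t+R)^q + (2*(K*(t+R)^(p+q))) *
            (Icc ((x + t - R)/2) ((x + t + R)/2) ∪
             Icc ((t - x - R)/2) ((t - x + R)/2)).indicator (fun _ => (1:ℝ)) s := by
        intro s hs
        have hsT : s ∈ Icc (0:ℝ) T := ⟨hs.1.le, hs.2.trans htT⟩
        have hs0 : (0:ℝ) ≤ s := hs.1.le
        have hsR0 : (0:ℝ) ≤ s + R := by linarith
        have hsq : (s+R)^q ≤ (t+R)^q :=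
          Real.rpow_le_rpow hsR0 (by linarith [hs.2]) (by linarith)
        have hspq : (s+R)^(p+q) ≤ (t+R)^(p+q) :=
          Real.rpow_le_rpow hsR0 (by linarith [hs.2]) (by linarith)
        rw [abs_of_nonneg (add_nonneg (hg0 _ _) (hg0 _ _))]
        have h1 := hgB s hsT (x + t - s)
        have h2 := hgB s hsT (x - t + s)
        have e1 : K*(s+R)^(p+q) *
            ((fun y : ℝ => |y|) ⁻¹' Ioc (s-R) (s+R)).indicator (fun _ => (1:ℝ)) (x + t - s) ≤
            K*(t+R)^(p+q) * (Icc ((x + t - R)/2) ((x + t + R)/2)).indicator (fun _ => (1:ℝ)) s := by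
          by_cases hm : (x + t - s) ∈ (fun y : ℝ => |y|) ⁻¹' Ioc (s-R) (s+R)
          · rw [Set.indicator_of_mem hm]
            rw [mem_preimage, mem_Ioc] at hm
            have hsI : s ∈ Icc ((x + t - R)/2) ((x + t + R)/2) := charStrip haR hm.1 hm.2
            rw [Set.indicator_of_mem hsI, mul_one, mul_one]
            exact mul_le_mul_of_nonneg_left hspq hK0
          · rw [Set.indicator_of_notMem hm, mul_zero]
            exact mul_nonneg (mul_nonneg hK0 htRpq0)
              (Set.indicator_nonneg (fun _ _ => zero_le_one) s)
        have e2 : K*(s+R)^(p+q) *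
            ((fun y : ℝ => |y|) ⁻¹' Ioc (s-R) (s+R)).indicator (fun _ => (1:ℝ)) (x - t + s) ≤
            K*(t+R)^(p+q) * (Icc ((t - x - R)/2) ((t - x + R)/2)).indicator (fun _ => (1:ℝ)) s := by
          by_cases hm : (x - t + s) ∈ (fun y : ℝ => |y|) ⁻¹' Ioc (s-R) (s+R)
          · rw [Set.indicator_of_mem hm]
            rw [mem_preimage, mem_Ioc] at hm
            have habs : |x - t + s| = |t - x - s| := by
              rw [show t - x - s = -(x - t + s) by ring, abs_neg]
            rw [habs] at hm
            have hsI : s ∈ Icc ((t - x - R)/2) ((t - x + R)/2) := charStrip hbR hm.1 hm.2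
            rw [Set.indicator_of_mem hsI, mul_one, mul_one]
            exact mul_le_mul_of_nonneg_left hspq hK0
          · rw [Set.indicator_of_notMem hm, mul_zero]
            exact mul_nonneg (mul_nonneg hK0 htRpq0)
              (Set.indicator_nonneg (fun _ _ => zero_le_one) s)
        have e3 := indUnion (Icc ((x + t - R)/2) ((x + t + R)/2))
          (Icc ((t - x - R)/2) ((t - x + R)/2)) s
        have e4 := mul_le_mul_of_nonneg_left e3 (mul_nonneg hK0 htRpq0)
        have h3 := mul_le_mul_of_nonneg_left hsq hK0
        linarith [h1, h2, e1, e2, e4, h3]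
      have hc₁ : (0:ℝ) ≤ 2*K*(t+R)^q := by nlinarith [mul_nonneg hK0 htRq0]
      have hc₂ : (0:ℝ) ≤ 2*(K*(t+R)^(p+q)) := by nlinarith [mul_nonneg hK0 htRpq0]
      have hout := halfIntBound ht0 (measurableSet_Icc.union measurableSet_Icc)
        (volIccUnion (x+t) (t-x) R (by linarith)) hc₁ hc₂ (by linarith) hFb
      rw [weight4, if_pos hD, one_mul]
      refine le_trans hout ?_
      have b1 : K * ((t+R)^q * t) ≤ K * ((t+R)^q * (t+R)) :=
        mul_le_mul_of_nonneg_left (mul_le_mul_of_nonneg_left (by linarith) htRq0) hK0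
      have b2 : K*(t+R)^(q+1) ≤ K*(T+R)^(p+q) := mul_le_mul_of_nonneg_left hq2 hK0
      have b3 : K*(t+R)^(p+q) ≤ K*(T+R)^(p+q) := mul_le_mul_of_nonneg_left hpq2 hK0
      have b4 := mul_le_mul_of_nonneg_left b3 (by linarith : (0:ℝ) ≤ 2*R)
      have b2' : K * ((t+R)^q * (t+R)) ≤ K*(T+R)^(p+q) := by rw [← hq1]; exact b2
      linarith [b1, b2', b4, hXK0]
    · have hFb : ∀ s ∈ Ioc (0:ℝ) t,
          |(|W (x + t - s) s| ^ p * |U (x + t - s) s| ^ q +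
            |W (x - t + s) s| ^ p * |U (x - t + s) s| ^ q)| ≤
          4*K*(t+R)^(p+q) + 0 * (∅ : Set ℝ).indicator (fun _ => (1:ℝ)) s := by
        intro s hs
        have hsT : s ∈ Icc (0:ℝ) T := ⟨hs.1.le, hs.2.trans htT⟩
        have hs0 : (0:ℝ) ≤ s := hs.1.le
        have hsR0 : (0:ℝ) ≤ s + R := by linarith
        have hsq' : (s+R)^q ≤ (s+R)^(p+q) :=
          Real.rpow_le_rpow_of_exponent_le (by linarith) (by linarith)
        have hspq : (s+R)^(p+q) ≤ (t+R)^(p+q) :=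
          Real.rpow_le_rpow hsR0 (by linarith [hs.2]) (by linarith)
        rw [abs_of_nonneg (add_nonneg (hg0 _ _) (hg0 _ _))]
        have h1 := hgB s hsT (x + t - s)
        have h2 := hgB s hsT (x - t + s)
        have hKs0 : (0:ℝ) ≤ K * (s+R)^(p+q) := mul_nonneg hK0 (Real.rpow_nonneg hsR0 _)
        have i1 := mul_le_mul_of_nonneg_left
          (hind1 ((fun y : ℝ => |y|) ⁻¹' Ioc (s-R) (s+R)) (x + t - s)) hKs0
        have i2 := mul_le_mul_of_nonneg_left
          (hind1 ((fun y : ℝ => |y|) ⁻¹' Ioc (s-R) (s+R)) (x - t + s)) hKs0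
        have m1 := mul_le_mul_of_nonneg_left hsq' hK0
        have m2 := mul_le_mul_of_nonneg_left hspq hK0
        linarith [h1, h2, i1, i2, m1, m2]
      have hc₁ : (0:ℝ) ≤ 4*K*(t+R)^(p+q) := by nlinarith [mul_nonneg hK0 htRpq0]
      have hout := halfIntBound ht0 MeasurableSet.empty (by simp) hc₁ le_rfl le_rfl hFb
      simp only [mul_zero, zero_mul, add_zero] at hout
      rw [weight4, if_neg hD]
      have hfrac : t * (t + |x| + R)⁻¹ ≤ 1 := by
        rw [← div_eq_mul_inv]; exact div_le_one_of_le₀ (by linarith) hxR.le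
      have hmain : (t + |x| + R)⁻¹ * |(1/2 : ℝ) * ∫ s in (0:ℝ)..t,
          (|W (x + t - s) s| ^ p * |U (x + t - s) s| ^ q +
           |W (x - t + s) s| ^ p * |U (x - t + s) s| ^ q)| ≤
          2*(K*(t+R)^(p+q)) * (t * (t + |x| + R)⁻¹) := by
        calc (t + |x| + R)⁻¹ * |(1/2 : ℝ) * ∫ s in (0:ℝ)..t,
            (|W (x + t - s) s| ^ p * |U (x + t - s) s| ^ q +
             |W (x - t + s) s| ^ p * |U (x - t + s) s| ^ q)| ≤
            (t + |x| + R)⁻¹ * ((4*K*(t+R)^(p+q) * t)/2) :=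
              mul_le_mul_of_nonneg_left hout (inv_nonneg.2 hxR.le)
          _ = 2*(K*(t+R)^(p+q)) * (t * (t + |x| + R)⁻¹) := by ring
      have hA0 : (0:ℝ) ≤ 2*(K*(t+R)^(p+q)) := by nlinarith [mul_nonneg hK0 htRpq0]
      have h5 : 2*(K*(t+R)^(p+q)) * (t * (t + |x| + R)⁻¹) ≤ 2*(K*(t+R)^(p+q)) := by
        calc 2*(K*(t+R)^(p+q)) * (t * (t + |x| + R)⁻¹) ≤ 2*(K*(t+R)^(p+q)) * 1 :=
              mul_le_mul_of_nonneg_left hfrac hA0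
          _ = 2*(K*(t+R)^(p+q)) := mul_one _
      have b3 : K*(t+R)^(p+q) ≤ K*(T+R)^(p+q) := mul_le_mul_of_nonneg_left hpq2 hK0
      have b4 := mul_le_mul_of_nonneg_left b3 (by norm_num : (0:ℝ) ≤ 2)
      have h6 : (0:ℝ) ≤ (1+2*R) * (K*(T+R)^(p+q)) := mul_nonneg (by linarith) hXK0
      linarith [hmain, h5, b4, h6]
  have keyf : ∀ x t : ℝ, t ∈ Icc (0:ℝ) T →
      weight4 R x t * |Lop' (fun y s => |U y s| ^ r) x t| ≤ K' * (T+R)^(r+1) := by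
    intro x t ht
    have ht0 : (0:ℝ) ≤ t := ht.1
    have htT : t ≤ T := ht.2
    have hx0 := abs_nonneg x
    have htR : (0:ℝ) < t + R := by linarith
    have htRr0 : (0:ℝ) ≤ (t+R)^r := Real.rpow_nonneg htR.le _
    have hr1 : (t+R)^(r+1) = (t+R)^r * (t+R) := Real.rpow_add_one (ne_of_gt htR) r
    have hr2 : (t+R)^(r+1) ≤ (T+R)^(r+1) :=
      Real.rpow_le_rpow htR.le (by linarith) (by linarith)
    have hw4a : 0 ≤ weight4 R x t ∧ weight4 R x t ≤ 1 := by
      have h1' : (1:ℝ) ≤ t + |x| + R := by linarith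
      unfold weight4; split_ifs
      · exact ⟨zero_le_one, le_rfl⟩
      · exact ⟨inv_nonneg.2 (by linarith), inv_le_one_of_one_le₀ h1'⟩
    show weight4 R x t * |(1/2 : ℝ) * ∫ s in (0:ℝ)..t,
        (|U (x + t - s) s| ^ r + |U (x - t + s) s| ^ r)| ≤ K' * (T+R)^(r+1)
    have hc₁ : (0:ℝ) ≤ 2*K'*(t+R)^r := by nlinarith [mul_nonneg hK'0 htRr0]
    have hFb : ∀ s ∈ Ioc (0:ℝ) t, |(|U (x + t - s) s| ^ r + |U (x - t + s) s| ^ r)| ≤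
        2*K'*(t+R)^r + 0 * (∅ : Set ℝ).indicator (fun _ => (1:ℝ)) s := by
      intro s hs
      have hsT : s ∈ Icc (0:ℝ) T := ⟨hs.1.le, hs.2.trans htT⟩
      have hs0 : (0:ℝ) ≤ s := hs.1.le
      have hsr : (s+R)^r ≤ (t+R)^r :=
        Real.rpow_le_rpow (by linarith) (by linarith [hs.2]) (by linarith)
      have m1 := mul_le_mul_of_nonneg_left hsr hK'0
      rw [abs_of_nonneg (add_nonneg (hf0 _ _) (hf0 _ _))]
      have h1 := hfB s hsT (x + t - s)
      have h2 := hfB s hsT (x - t + s)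
      linarith [h1, h2, m1]
    have hout := halfIntBound ht0 MeasurableSet.empty (by simp) hc₁ le_rfl le_rfl hFb
    simp only [mul_zero, zero_mul, add_zero] at hout
    have hI0 : (0:ℝ) ≤ |(1/2 : ℝ) * ∫ s in (0:ℝ)..t,
        (|U (x + t - s) s| ^ r + |U (x - t + s) s| ^ r)| := abs_nonneg _
    have hstep : weight4 R x t * |(1/2 : ℝ) * ∫ s in (0:ℝ)..t,
        (|U (x + t - s) s| ^ r + |U (x - t + s) s| ^ r)| ≤ (2*K'*(t+R)^r * t)/2 :=
      calc weight4 R x t * |(1/2 : ℝ) * ∫ s in (0:ℝ)..t,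
          (|U (x + t - s) s| ^ r + |U (x - t + s) s| ^ r)| ≤
          1 * |(1/2 : ℝ) * ∫ s in (0:ℝ)..t,
          (|U (x + t - s) s| ^ r + |U (x - t + s) s| ^ r)| :=
            mul_le_mul_of_nonneg_right hw4a.2 hI0
        _ = |(1/2 : ℝ) * ∫ s in (0:ℝ)..t,
            (|U (x + t - s) s| ^ r + |U (x - t + s) s| ^ r)| := one_mul _
        _ ≤ (2*K'*(t+R)^r * t)/2 := hout
    refine hstep.trans ?_
    have b1 : K' * ((t+R)^r * t) ≤ K' * ((t+R)^r * (t+R)) :=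
      mul_le_mul_of_nonneg_left (mul_le_mul_of_nonneg_left (by linarith) htRr0) hK'0
    have b2 : K'*(t+R)^(r+1) ≤ K'*(T+R)^(r+1) := mul_le_mul_of_nonneg_left hr2 hK'0
    have b2' : K' * ((t+R)^r * (t+R)) ≤ K'*(T+R)^(r+1) := by rw [← hr1]; exact b2
    linarith [b1, b2']
  refine ⟨?_, ?_, ?_, ?_, ?_, ?_⟩
  · -- norm3 of Lop (|W|^p |U|^q)
    rw [norm3]
    refine Real.iSup_le ?_ hRHSg
    rintro ⟨x, t, ht⟩
    show (t + |x| + R)⁻¹ * |Lop (fun y s => |W y s| ^ p * |U y s| ^ q) x t| ≤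
      Cc * MW ^ p * MU ^ q * (T + R) ^ (p + q)
    have ht0 : (0:ℝ) ≤ t := ht.1
    have htT : t ≤ T := ht.2
    have hx0 := abs_nonneg x
    have hxR : (0:ℝ) < t + |x| + R := by linarith
    have htR : (0:ℝ) < t + R := by linarith
    have htRpq0 : (0:ℝ) ≤ (t+R)^(p+q) := Real.rpow_nonneg htR.le _
    have htRq10 : (0:ℝ) ≤ (t+R)^(q+1) := Real.rpow_nonneg htR.le _
    have hq2 : (t+R)^(q+1) ≤ (T+R)^(p+q) :=
      le_trans (Real.rpow_le_rpow htR.le (by linarith) (by linarith))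
        (Real.rpow_le_rpow_of_exponent_le hTR1 (by linarith))
    have hpq2 : (t+R)^(p+q) ≤ (T+R)^(p+q) :=
      Real.rpow_le_rpow htR.le (by linarith) (by linarith)
    have hc₁ : (0:ℝ) ≤ 2*K*(t+R)^(q+1) + 4*R*(K*(t+R)^(p+q)) := by
      nlinarith [mul_nonneg hK0 htRq10, mul_nonneg hK0 htRpq0]
    have hFb : ∀ s ∈ Ioc (0:ℝ) t,
        |∫ y in (x - t + s)..(x + t - s), |W y s| ^ p * |U y s| ^ q| ≤
        (2*K*(t+R)^(q+1) + 4*R*(K*(t+R)^(p+q))) +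
          0 * (∅ : Set ℝ).indicator (fun _ => (1:ℝ)) s := by
      intro s hs
      have hsT : s ∈ Icc (0:ℝ) T := ⟨hs.1.le, hs.2.trans htT⟩
      have hs0 : (0:ℝ) ≤ s := hs.1.le
      have hsR0 : (0:ℝ) ≤ s + R := by linarith
      have hab : x - t + s ≤ x + t - s := by linarith [hs.2]
      have hin : ∀ y ∈ Ioc (x - t + s) (x + t - s), |(|W y s| ^ p * |U y s| ^ q)| ≤
          K*(s+R)^q + K*(s+R)^(p+q) *
            ((fun y : ℝ => |y|) ⁻¹' Ioc (s-R) (s+R)).indicator (fun _ => (1:ℝ)) y := by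
        intro y _
        rw [abs_of_nonneg (hg0 y s)]
        exact hgB s hsT y
      have hin2 := boundInt hab (continuous_abs.measurable measurableSet_Ioc)
        (volAbsIoc s R (by linarith))
        (mul_nonneg hK0 (Real.rpow_nonneg hsR0 q))
        (mul_nonneg hK0 (Real.rpow_nonneg hsR0 (p+q)))
        (by linarith) hin
      simp only [zero_mul, add_zero]
      refine le_trans hin2 ?_
      have hsq : (s+R)^q ≤ (t+R)^q :=
        Real.rpow_le_rpow hsR0 (by linarith [hs.2]) (by linarith)
      have hspq : (s+R)^(p+q) ≤ (t+R)^(p+q) :=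
        Real.rpow_le_rpow hsR0 (by linarith [hs.2]) (by linarith)
      have hq1 : (t+R)^(q+1) = (t+R)^q * (t+R) := Real.rpow_add_one (ne_of_gt htR) q
      have h1 : (s+R)^q * (x + t - s - (x - t + s)) ≤ (t+R)^q * (2*(t+R)) :=
        mul_le_mul hsq (by linarith [hs.2]) (by linarith [hs.2]) (Real.rpow_nonneg htR.le q)
      have h2 := mul_le_mul_of_nonneg_left h1 hK0
      have h3 := mul_le_mul_of_nonneg_left hspq hK0
      have h4 := mul_le_mul_of_nonneg_right h3 (by linarith : (0:ℝ) ≤ 4*R)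
      have h5' : K*((t+R)^q*(2*(t+R))) = 2*K*(t+R)^(q+1) := by rw [hq1]; ring
      linarith [h2, h4, h5']
    have hout := halfIntBound ht0 MeasurableSet.empty (by simp) hc₁ le_rfl le_rfl hFb
    simp only [mul_zero, zero_mul, add_zero] at hout
    rw [Lop]
    have hfrac : t * (t + |x| + R)⁻¹ ≤ 1 := by
      rw [← div_eq_mul_inv]; exact div_le_one_of_le₀ (by linarith) hxR.le
    have hmain : (t + |x| + R)⁻¹ *
        |(1/2 : ℝ) * ∫ s in (0:ℝ)..t, ∫ y in (x - t + s)..(x + t - s),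
          |W y s| ^ p * |U y s| ^ q| ≤
        (K*(t+R)^(q+1) + 2*R*(K*(t+R)^(p+q))) * (t * (t + |x| + R)⁻¹) :=
      calc (t + |x| + R)⁻¹ *
          |(1/2 : ℝ) * ∫ s in (0:ℝ)..t, ∫ y in (x - t + s)..(x + t - s),
            |W y s| ^ p * |U y s| ^ q| ≤
          (t + |x| + R)⁻¹ * (((2*K*(t+R)^(q+1) + 4*R*(K*(t+R)^(p+q))) * t)/2) :=
            mul_le_mul_of_nonneg_left hout (inv_nonneg.2 hxR.le)
        _ = (K*(t+R)^(q+1) + 2*R*(K*(t+R)^(p+q))) * (t * (t + |x| + R)⁻¹) := by ring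
    have hA0 : (0:ℝ) ≤ K*(t+R)^(q+1) + 2*R*(K*(t+R)^(p+q)) := by
      nlinarith [mul_nonneg hK0 htRq10, mul_nonneg hK0 htRpq0]
    have h5 : (K*(t+R)^(q+1) + 2*R*(K*(t+R)^(p+q))) * (t * (t + |x| + R)⁻¹) ≤
        K*(t+R)^(q+1) + 2*R*(K*(t+R)^(p+q)) := by
      calc (K*(t+R)^(q+1) + 2*R*(K*(t+R)^(p+q))) * (t * (t + |x| + R)⁻¹) ≤
          (K*(t+R)^(q+1) + 2*R*(K*(t+R)^(p+q))) * 1 :=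
            mul_le_mul_of_nonneg_left hfrac hA0
        _ = K*(t+R)^(q+1) + 2*R*(K*(t+R)^(p+q)) := mul_one _
    have b2 : K*(t+R)^(q+1) ≤ K*(T+R)^(p+q) := mul_le_mul_of_nonneg_left hq2 hK0
    have b3 : K*(t+R)^(p+q) ≤ K*(T+R)^(p+q) := mul_le_mul_of_nonneg_left hpq2 hK0
    have b4 := mul_le_mul_of_nonneg_left b3 (by linarith : (0:ℝ) ≤ 2*R)
    linarith [hmain, h5, b2, b4, glueg1]
  · -- norm3 of Lop (|U|^r)
    rw [norm3]
    refine Real.iSup_le ?_ hRHSf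
    rintro ⟨x, t, ht⟩
    show (t + |x| + R)⁻¹ * |Lop (fun y s => |U y s| ^ r) x t| ≤ Cc * MU ^ r * (T + R) ^ (r + 1)
    have ht0 : (0:ℝ) ≤ t := ht.1
    have htT : t ≤ T := ht.2
    have hx0 := abs_nonneg x
    have hxR : (0:ℝ) < t + |x| + R := by linarith
    have htR : (0:ℝ) < t + R := by linarith
    have hc₁ : (0:ℝ) ≤ 2*K'*(t+R)^(r+1) :=
      mul_nonneg (by linarith) (Real.rpow_nonneg htR.le _)
    have hFb : ∀ s ∈ Ioc (0:ℝ) t, |∫ y in (x - t + s)..(x + t - s), |U y s| ^ r| ≤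
        2*K'*(t+R)^(r+1) + 0 * (∅ : Set ℝ).indicator (fun _ => (1:ℝ)) s := by
      intro s hs
      have hsT : s ∈ Icc (0:ℝ) T := ⟨hs.1.le, hs.2.trans htT⟩
      have hs0 : (0:ℝ) ≤ s := hs.1.le
      have hab : x - t + s ≤ x + t - s := by linarith [hs.2]
      have hin : ∀ y ∈ Ioc (x - t + s) (x + t - s), |(|U y s| ^ r)| ≤
          K'*(s+R)^r + 0 * (∅ : Set ℝ).indicator (fun _ => (1:ℝ)) y := by
        intro y _
        rw [abs_of_nonneg (hf0 y s)]
        simpa using hfB s hsT y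
      have hin2 := boundInt hab MeasurableSet.empty (by simp)
        (mul_nonneg hK'0 (Real.rpow_nonneg (by linarith : (0:ℝ) ≤ s + R) r))
        le_rfl le_rfl hin
      simp only [mul_zero, add_zero, zero_mul] at hin2 ⊢
      refine hin2.trans ?_
      have hsr : (s+R)^r ≤ (t+R)^r :=
        Real.rpow_le_rpow (by linarith) (by linarith [hs.2]) (by linarith)
      have hr1 : (t+R)^(r+1) = (t+R)^r * (t+R) := Real.rpow_add_one (ne_of_gt htR) r
      have hsr0 : (0:ℝ) ≤ (s+R)^r := Real.rpow_nonneg (by linarith) r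
      have h1 : (s+R)^r * (x + t - s - (x - t + s)) ≤ (t+R)^r * (2*(t+R)) := by
        apply mul_le_mul hsr (by linarith [hs.2]) (by linarith [hs.2]) (Real.rpow_nonneg htR.le r)
      rw [hr1]
      nlinarith [hK'0, h1, mul_le_mul_of_nonneg_left h1 hK'0]
    have hout := halfIntBound ht0 MeasurableSet.empty (by simp) hc₁ le_rfl le_rfl hFb
    simp only [mul_zero, zero_mul, add_zero] at hout
    rw [Lop]
    have hfrac : t * (t + |x| + R)⁻¹ ≤ 1 := by
      rw [← div_eq_mul_inv]; exact div_le_one_of_le₀ (by linarith) hxR.le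
    have hmain : (t + |x| + R)⁻¹ *
        |(1/2 : ℝ) * ∫ s in (0:ℝ)..t, ∫ y in (x - t + s)..(x + t - s), |U y s| ^ r| ≤
        K'*(t+R)^(r+1) * (t * (t + |x| + R)⁻¹) :=
      calc (t + |x| + R)⁻¹ *
          |(1/2 : ℝ) * ∫ s in (0:ℝ)..t, ∫ y in (x - t + s)..(x + t - s), |U y s| ^ r| ≤
          (t + |x| + R)⁻¹ * ((2*K'*(t+R)^(r+1) * t)/2) :=
            mul_le_mul_of_nonneg_left hout (inv_nonneg.2 hxR.le)
        _ = K'*(t+R)^(r+1) * (t * (t + |x| + R)⁻¹) := by ring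
    have hA0 : (0:ℝ) ≤ K'*(t+R)^(r+1) := mul_nonneg hK'0 (Real.rpow_nonneg htR.le _)
    have h5 : K'*(t+R)^(r+1) * (t * (t + |x| + R)⁻¹) ≤ K'*(t+R)^(r+1) := by
      calc K'*(t+R)^(r+1) * (t * (t + |x| + R)⁻¹) ≤ K'*(t+R)^(r+1) * 1 :=
            mul_le_mul_of_nonneg_left hfrac hA0
        _ = K'*(t+R)^(r+1) := mul_one _
    have h6 : (t+R)^(r+1) ≤ (T+R)^(r+1) :=
      Real.rpow_le_rpow htR.le (by linarith) (by linarith)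
    have h7 : K'*(t+R)^(r+1) ≤ K'*(T+R)^(r+1) := mul_le_mul_of_nonneg_left h6 hK'0
    have h8 : K'*(T+R)^(r+1) ≤ Cc * MU^r * (T+R)^(r+1) := by
      rw [hK'def]
      have := mul_le_mul_of_nonneg_right hCc3
        (mul_nonneg (Real.rpow_nonneg hMU0 r) (Real.rpow_nonneg hTRpos.le (r+1)))
      calc (2:ℝ)^r * MU^r * (T+R)^(r+1) = 2^r * (MU^r * (T+R)^(r+1)) := by ring
        _ ≤ Cc * (MU^r * (T+R)^(r+1)) := this
        _ = Cc * MU^r * (T+R)^(r+1) := by ring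
    linarith
  · -- norm4 of Lop' (|W|^p |U|^q)
    rw [norm4]
    refine Real.iSup_le ?_ hRHSg
    rintro ⟨x, t, ht⟩
    exact le_trans (keyg x t ht) glueg3
  · -- norm4 of Lop' (|U|^r)
    rw [norm4]
    refine Real.iSup_le ?_ hRHSf
    rintro ⟨x, t, ht⟩
    exact le_trans (keyf x t ht) gluef
  · -- norm3 of Lop' (|W|^p |U|^q)
    rw [norm3]
    refine Real.iSup_le ?_ hRHSg
    rintro ⟨x, t, ht⟩
    have hw34 : (t + |x| + R)⁻¹ ≤ weight4 R x t := by
      have h1' : (1:ℝ) ≤ t + |x| + R := by linarith [abs_nonneg x, ht.1]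
      unfold weight4; split_ifs
      · exact inv_le_one_of_one_le₀ h1'
      · exact le_rfl
    have step := mul_le_mul_of_nonneg_right hw34
      (abs_nonneg (Lop' (fun y s => |W y s| ^ p * |U y s| ^ q) x t))
    exact le_trans (le_trans step (keyg x t ht)) glueg3
  · -- norm3 of Lop' (|U|^r)
    rw [norm3]
    refine Real.iSup_le ?_ hRHSf
    rintro ⟨x, t, ht⟩
    have hw34 : (t + |x| + R)⁻¹ ≤ weight4 R x t := by
      have h1' : (1:ℝ) ≤ t + |x| + R := by linarith [abs_nonneg x, ht.1]
      unfold weight4; split_ifs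
      · exact inv_le_one_of_one_le₀ h1'
      · exact le_rfl
    have step := mul_le_mul_of_nonneg_right hw34
      (abs_nonneg (Lop' (fun y s => |U y s| ^ r) x t))
    exact le_trans (le_trans step (keyf x t ht)) gluef

end
end
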